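/- arXiv:2109.07507 — 6 statements merged into one kernel-verified Lean document; each statement's English description precedes it below -/
import Mathlib

section
/- Let p ∈ ℂ[z₁,…,z_d] be a polynomial with no zeros in ℍ^d and with p(0)=0. Write the homogeneous expansion p = Σ_{j=M}^{n} P_j, where P_j is homogeneous of degree j and P_M ≢ 0. Then P_M has no zeros in ℍ^d, and there exists μ ∈ ℂ with |μ| = 1 such that μP_M has real coefficients. -/
open MvPolynomial Polynomial

noncomputable def Complex.abs : AbsoluteValue ℂ ℝ where
  toFun z := ‖z‖
  map_mul' := norm_mul
  nonneg' := norm_nonneg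
  eq_zero' _ := norm_eq_zero
  add_le' := norm_add_le

lemma Complex.abs_ofReal (r : ℝ) : Complex.abs (r : ℂ) = |r| := Complex.norm_real r

lemma Complex.norm_eq_abs (z : ℂ) : ‖z‖ = Complex.abs z := rfl

lemma Complex.abs_re_lt_abs {z : ℂ} : |z.re| < Complex.abs z ↔ z.im ≠ 0 := Complex.abs_re_lt_norm

lemma Complex.abs_im_le_abs (z : ℂ) : |z.im| ≤ Complex.abs z := Complex.abs_im_le_norm z

lemma Complex.sq_abs (z : ℂ) : Complex.abs z ^ 2 = Complex.normSq z := Complex.sq_norm z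

-- bridging eval lemma
lemma eval_aeval_poly {d : ℕ} (q : MvPolynomial (Fin d) ℂ) (f : Fin d → Polynomial ℂ) (x : ℂ) :
    Polynomial.eval x (MvPolynomial.aeval f q) = MvPolynomial.eval (fun i => Polynomial.eval x (f i)) q := by
  induction q using MvPolynomial.induction_on with
  | C a => simp
  | add p q hp hq => simp [hp, hq]
  | mul_X p i hp => simp [hp]

-- scaling for homogeneous
lemma eval_scale {d n : ℕ} {q : MvPolynomial (Fin d) ℂ} (hq : q.IsHomogeneous n) (c : ℂ)
    (z : Fin d → ℂ) : MvPolynomial.eval (fun i => c * z i) q = c ^ n * MvPolynomial.eval z q := by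
  rw [MvPolynomial.eval_eq, MvPolynomial.eval_eq, Finset.mul_sum]
  apply Finset.sum_congr rfl
  intro m hm
  have hdeg : m.degree = n := by
    by_contra h
    exact (MvPolynomial.mem_support_iff.mp hm) (hq.coeff_eq_zero h)
  have : ∏ i ∈ m.support, (c * z i) ^ m i
      = c ^ n * ∏ i ∈ m.support, (z i) ^ m i := by
    simp_rw [mul_pow, Finset.prod_mul_distrib, Finset.prod_pow_eq_pow_sum]
    rw [← hdeg]; rfl
  rw [this]; ring

lemma vanish_on_prod : ∀ (d : ℕ) (S : Fin d → Set ℂ), (∀ i, (S i).Infinite) →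
    ∀ (q : MvPolynomial (Fin d) ℂ), (∀ z : Fin d → ℂ, (∀ i, z i ∈ S i) → MvPolynomial.eval z q = 0) → q = 0 := by
  intro d
  induction d with
  | zero =>
    intro S hS q hq
    obtain ⟨a, rfl⟩ := MvPolynomial.C_surjective (Fin 0) q
    have := hq (fun i => i.elim0) (fun i => i.elim0)
    simp at this
    rw [this, map_zero]
  | succ d ih =>
    intro S hS q hq
    have h0 : MvPolynomial.finSuccEquiv ℂ d q = 0 := by
      rw [Polynomial.ext_iff]
      intro k
      rw [Polynomial.coeff_zero]
      apply ih (fun i => S i.succ) (fun i => hS i.succ)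
      intro z' hz'
      have hg : (Polynomial.map (MvPolynomial.eval z') (MvPolynomial.finSuccEquiv ℂ d q)) = 0 := by
        apply Polynomial.eq_zero_of_infinite_isRoot
        apply Set.Infinite.mono (s := S 0) _ (hS 0)
        intro a ha
        simp only [Set.mem_setOf_eq, Polynomial.IsRoot]
        rw [← MvPolynomial.eval_eq_eval_mv_eval']
        apply hq
        intro i
        refine Fin.cases ?_ ?_ i
        · simpa using ha
        · intro j; simpa using hz' j
      have := congrArg (fun P => Polynomial.coeff P k) hg
      simpa using this
    have := congrArg (MvPolynomial.finSuccEquiv ℂ d).symm h0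
    simpa using this

-- multiset product bound
lemma multiset_prod_bound (ρ : ℝ) (hρ : 0 < ρ) :
    ∀ (s : Multiset ℂ), (∀ r ∈ s, ρ ≤ Complex.abs r) →
      (s.map (fun r => Complex.abs (1 - r))).prod ≤
        ((1 + ρ)/ρ) ^ Multiset.card s * (s.map (fun r => Complex.abs r)).prod := by
  intro s
  induction s using Multiset.induction_on with
  | empty => simp
  | cons r s ih =>
    intro h
    have hr : ρ ≤ Complex.abs r := h r (Multiset.mem_cons_self r s)
    have hs := ih (fun x hx => h x (Multiset.mem_cons_of_mem hx))
    simp only [Multiset.map_cons, Multiset.prod_cons, Multiset.card_cons]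
    have h1 : Complex.abs (1 - r) ≤ ((1 + ρ)/ρ) * Complex.abs r := by
      have : Complex.abs (1 - r) ≤ 1 + Complex.abs r := by
        calc Complex.abs (1 - r) ≤ Complex.abs 1 + Complex.abs r := by
              simpa using Complex.abs.sub_le_add 1 r
          _ = 1 + Complex.abs r := by simp
      have h2 : 1 + Complex.abs r ≤ ((1+ρ)/ρ) * Complex.abs r := by
        rw [div_mul_eq_mul_div, le_div_iff₀ hρ, add_mul, one_mul, add_mul, one_mul]
        nlinarith
      linarith
    have hpos : (0:ℝ) ≤ Complex.abs (1 - r) := Complex.abs.nonneg _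
    have hprodnn : (0:ℝ) ≤ (Multiset.map (fun r => Complex.abs r) s).prod := by
      apply Multiset.prod_nonneg; intro x hx
      obtain ⟨y, _, rfl⟩ := Multiset.mem_map.mp hx
      exact Complex.abs.nonneg _
    have hprodnn2 : (0:ℝ) ≤ (Multiset.map (fun r => Complex.abs (1 - r)) s).prod := by
      apply Multiset.prod_nonneg; intro x hx
      obtain ⟨y, _, rfl⟩ := Multiset.mem_map.mp hx
      exact Complex.abs.nonneg _
    have hc : (0:ℝ) ≤ (1+ρ)/ρ * Complex.abs r := by positivity
    calc Complex.abs (1 - r) * (Multiset.map (fun r => Complex.abs (1 - r)) s).prod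
        ≤ ((1+ρ)/ρ * Complex.abs r) * (((1 + ρ)/ρ) ^ Multiset.card s * (Multiset.map (fun r => Complex.abs r) s).prod) := by
          apply mul_le_mul h1 hs hprodnn2 hc
      _ = ((1+ρ)/ρ) ^ (Multiset.card s + 1) * (Complex.abs r * (Multiset.map (fun r => Complex.abs r) s).prod) := by ring

lemma natDegree_aeval_le {d : ℕ} (q : MvPolynomial (Fin d) ℂ) (f : Fin d → Polynomial ℂ)
    (hf : ∀ i, (f i).natDegree ≤ 1) : (MvPolynomial.aeval f q).natDegree ≤ q.totalDegree := by
  rw [MvPolynomial.aeval_def, MvPolynomial.eval₂_eq]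
  apply Polynomial.natDegree_sum_le_of_forall_le
  intro m hm
  have h1 : ((algebraMap ℂ (Polynomial ℂ)) (MvPolynomial.coeff m q) *
      ∏ i ∈ m.support, f i ^ m i).natDegree ≤ (∏ i ∈ m.support, f i ^ m i).natDegree := by
    have : (algebraMap ℂ (Polynomial ℂ)) (MvPolynomial.coeff m q) = Polynomial.C (MvPolynomial.coeff m q) := rfl
    rw [this]
    exact Polynomial.natDegree_C_mul_le _ _
  refine le_trans h1 ?_
  refine le_trans (Polynomial.natDegree_prod_le _ _) ?_
  have step : ∑ i ∈ m.support, (f i ^ m i).natDegree ≤ ∑ i ∈ m.support, m i :=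
    Finset.sum_le_sum (fun i _ => by
      refine (Polynomial.natDegree_pow_le).trans ?_
      have := Nat.mul_le_mul_left (m i) (hf i)
      simpa using this)
  refine step.trans ?_
  rw [MvPolynomial.totalDegree]
  exact Finset.le_sup (f := fun m => m.sum fun _ e => e) hm

lemma root_bound (Q : Polynomial ℂ) (n : ℕ) (hdeg : Q.natDegree ≤ n)
    (ρ : ℝ) (hρ : 0 < ρ) (hroots : ∀ r : ℂ, Q.IsRoot r → ρ ≤ Complex.abs r) :
    Complex.abs (Q.eval 1) ≤ ((1 + ρ)/ρ) ^ n * Complex.abs (Q.eval 0) := by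
  have hsplit : Multiset.card Q.roots = Q.natDegree :=
    Polynomial.splits_iff_card_roots.mp (IsAlgClosed.splits Q)
  have hfact := Polynomial.C_leadingCoeff_mul_prod_multiset_X_sub_C (p := Q) hsplit
  have hmem : ∀ r ∈ Q.roots, ρ ≤ Complex.abs r := by
    intro r hr
    exact hroots r (Polynomial.isRoot_of_mem_roots hr)
  have he : ∀ x : ℂ, Q.eval x = Q.leadingCoeff * ((Q.roots.map (fun r => x - r)).prod) := by
    intro x
    conv_lhs => rw [← hfact]
    rw [Polynomial.eval_mul, Polynomial.eval_C, Polynomial.eval_multiset_prod]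
    congr 1
    rw [Multiset.map_map]
    apply congrArg Multiset.prod
    apply Multiset.map_congr rfl
    intro r _
    simp
  rw [he 1, he 0, map_mul, map_mul]
  have h1 : Complex.abs ((Q.roots.map (fun r => (1:ℂ) - r)).prod)
      = ((Q.roots.map (fun r => Complex.abs (1 - r))).prod) := by
    rw [map_multiset_prod Complex.abs, Multiset.map_map]
    apply congrArg Multiset.prod
    exact Multiset.map_congr rfl (fun r _ => rfl)
  have h0 : Complex.abs ((Q.roots.map (fun r => (0:ℂ) - r)).prod)
      = ((Q.roots.map (fun r => Complex.abs r)).prod) := by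
    rw [map_multiset_prod Complex.abs, Multiset.map_map]
    apply congrArg Multiset.prod
    apply Multiset.map_congr rfl
    intro r _
    show Complex.abs (0 - r) = Complex.abs r
    rw [zero_sub, map_neg_eq_map]
  rw [h1, h0]
  have key := multiset_prod_bound ρ hρ Q.roots hmem
  have hbase : (1:ℝ) ≤ (1+ρ)/ρ := by
    rw [le_div_iff₀ hρ]; linarith
  have hmono : ((1+ρ)/ρ) ^ Multiset.card Q.roots ≤ ((1+ρ)/ρ) ^ n :=
    pow_le_pow_right₀ hbase (by omega)
  have hlc : (0:ℝ) ≤ Complex.abs Q.leadingCoeff := Complex.abs.nonneg _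
  have hprodnn : (0:ℝ) ≤ (Q.roots.map (fun r => Complex.abs r)).prod := by
    apply Multiset.prod_nonneg; intro x hx
    obtain ⟨y, _, rfl⟩ := Multiset.mem_map.mp hx
    exact Complex.abs.nonneg _
  calc Complex.abs Q.leadingCoeff * (Q.roots.map (fun r => Complex.abs (1 - r))).prod
      ≤ Complex.abs Q.leadingCoeff * (((1+ρ)/ρ) ^ Multiset.card Q.roots * (Q.roots.map (fun r => Complex.abs r)).prod) :=
        mul_le_mul_of_nonneg_left key hlc
    _ ≤ Complex.abs Q.leadingCoeff * (((1+ρ)/ρ) ^ n * (Q.roots.map (fun r => Complex.abs r)).prod) := by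
        apply mul_le_mul_of_nonneg_left _ hlc
        exact mul_le_mul_of_nonneg_right hmono hprodnn
    _ = ((1+ρ)/ρ) ^ n * (Complex.abs Q.leadingCoeff * (Q.roots.map (fun r => Complex.abs r)).prod) := by ring

lemma upper_infinite : ({w : ℂ | 0 < w.im}).Infinite := by
  refine Set.infinite_of_injective_forall_mem (f := fun n : ℕ => ((n:ℝ) + 1) * Complex.I) ?_ ?_
  · intro a b hab
    have := congrArg Complex.im hab
    simp at this
    exact_mod_cast this
  · intro n
    simp [Set.mem_setOf_eq]
    positivity

set_option maxHeartbeats 2000000 in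
theorem part1 (d : ℕ) (p : MvPolynomial (Fin d) ℂ) (M : ℕ) (hd : 0 < d)
    (hstable : ∀ z : Fin d → ℂ, (∀ i, 0 < (z i).im) → MvPolynomial.eval z p ≠ 0)
    (hM : MvPolynomial.homogeneousComponent M p ≠ 0)
    (hMmin : ∀ j < M, MvPolynomial.homogeneousComponent j p = 0) :
    ∀ z : Fin d → ℂ, (∀ i, 0 < (z i).im) →
      MvPolynomial.eval z (MvPolynomial.homogeneousComponent M p) ≠ 0 := by
  intro z hz hzero
  set P := MvPolynomial.homogeneousComponent M p with hP
  have hPhom : P.IsHomogeneous M := MvPolynomial.homogeneousComponent_isHomogeneous M p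
  have hMn : M ≤ p.totalDegree := by
    by_contra h
    push_neg at h
    exact hM (MvPolynomial.homogeneousComponent_eq_zero M p h)
  set n := p.totalDegree with hn
  -- find w in upper poly half-plane where P is nonzero
  obtain ⟨w, hw, hwP⟩ : ∃ w : Fin d → ℂ, (∀ i, 0 < (w i).im) ∧ MvPolynomial.eval w P ≠ 0 := by
    by_contra h
    push_neg at h
    exact hM (vanish_on_prod d (fun _ => {w : ℂ | 0 < w.im}) (fun _ => upper_infinite) P
      (fun zz hzz => h zz hzz))
  -- radius
  have hne : (Finset.univ : Finset (Fin d)).Nonempty := Finset.univ_nonempty_iff.mpr ⟨⟨0, hd⟩⟩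
  set ρ : ℝ := Finset.inf' Finset.univ hne (fun i => (z i).im / (Complex.abs (w i - z i) + 1)) with hρdef
  have hρ : 0 < ρ := by
    rw [hρdef, Finset.lt_inf'_iff]
    intro i _
    have : (0:ℝ) < Complex.abs (w i - z i) + 1 := by positivity
    exact div_pos (hz i) this
  have hρi : ∀ i, ρ * Complex.abs (w i - z i) < (z i).im := by
    intro i
    have h1 : ρ ≤ (z i).im / (Complex.abs (w i - z i) + 1) :=
      Finset.inf'_le _ (Finset.mem_univ i)
    have h2 : (0:ℝ) < Complex.abs (w i - z i) + 1 := by positivity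
    have h3 : ρ * (Complex.abs (w i - z i) + 1) ≤ (z i).im := by
      rw [← le_div_iff₀ h2]; exact h1
    nlinarith [Complex.abs.nonneg (w i - z i)]
  set C : ℝ := ((1 + ρ)/ρ) ^ n with hC
  have hCpos : 0 < C := by
    apply pow_pos
    positivity
  -- key inequality
  have key : ∀ s : ℝ, 0 < s →
      Complex.abs (MvPolynomial.eval (fun i => (s:ℂ) * w i) p)
        ≤ C * Complex.abs (MvPolynomial.eval (fun i => (s:ℂ) * z i) p) := by
    intro s hs
    set Q : Polynomial ℂ := MvPolynomial.aeval
      (fun i => Polynomial.C ((s:ℂ) * z i) + Polynomial.C ((s:ℂ) * (w i - z i)) * Polynomial.X) p with hQ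
    have hQeval : ∀ x : ℂ, Q.eval x
        = MvPolynomial.eval (fun i => (s:ℂ) * z i + (s:ℂ) * (w i - z i) * x) p := by
      intro x
      rw [hQ, eval_aeval_poly]
      simp
    have hQdeg : Q.natDegree ≤ n := by
      apply natDegree_aeval_le
      intro i
      refine le_trans (Polynomial.natDegree_add_le _ _) ?_
      simp only [Polynomial.natDegree_C]
      refine max_le (by omega) ?_
      refine le_trans (Polynomial.natDegree_C_mul_le _ _) ?_
      simp
    have hQroots : ∀ r : ℂ, Q.IsRoot r → ρ ≤ Complex.abs r := by
      intro r hr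
      by_contra hlt
      push_neg at hlt
      apply hstable (fun i => (s:ℂ) * z i + (s:ℂ) * (w i - z i) * r)
      · intro i
        have him : ((s:ℂ) * z i + (s:ℂ) * (w i - z i) * r).im
            = s * ((z i).im + ((w i - z i) * r).im) := by
          simp [Complex.add_im, Complex.mul_im, Complex.ofReal_re, Complex.ofReal_im]
          ring
        rw [him]
        apply mul_pos hs
        have habs : |((w i - z i) * r).im| ≤ Complex.abs (w i - z i) * Complex.abs r := by
          refine le_trans (Complex.abs_im_le_abs _) ?_
          rw [map_mul]
        have : Complex.abs (w i - z i) * Complex.abs r ≤ Complex.abs (w i - z i) * ρ := by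
          exact mul_le_mul_of_nonneg_left hlt.le (Complex.abs.nonneg _)
        have hlt2 : Complex.abs (w i - z i) * ρ < (z i).im := by
          rw [mul_comm]; exact hρi i
        have := abs_le.mp habs
        linarith
      · rw [← hQeval r]; exact hr
    have h1 := root_bound Q n hQdeg ρ hρ hQroots
    have e1 : Q.eval 1 = MvPolynomial.eval (fun i => (s:ℂ) * w i) p := by
      rw [hQeval]
      exact congrArg (fun v => MvPolynomial.eval v p) (funext fun i => by ring)
    have e0 : Q.eval 0 = MvPolynomial.eval (fun i => (s:ℂ) * z i) p := by
      rw [hQeval]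
      exact congrArg (fun v => MvPolynomial.eval v p) (funext fun i => by ring)
    rw [e1, e0] at h1
    exact h1
  -- homogeneous expansion of evaluations
  have hsum : ∀ (u : Fin d → ℂ) (s : ℝ),
      MvPolynomial.eval (fun i => (s:ℂ) * u i) p
        = ∑ j ∈ Finset.range (n+1), (s:ℂ)^j * MvPolynomial.eval u (MvPolynomial.homogeneousComponent j p) := by
    intro u s
    conv_lhs => rw [← MvPolynomial.sum_homogeneousComponent p]
    rw [map_sum]
    apply Finset.sum_congr rfl
    intro j _
    exact eval_scale (MvPolynomial.homogeneousComponent_isHomogeneous j p) _ u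
  have hcz : ∀ j ≤ M, MvPolynomial.eval z (MvPolynomial.homogeneousComponent j p) = 0 := by
    intro j hj
    rcases Nat.lt_or_ge j M with h | h
    · rw [hMmin j h, map_zero]
    · have : j = M := le_antisymm hj h
      rw [this]; exact hzero
  have hbz : ∀ j < M, MvPolynomial.eval w (MvPolynomial.homogeneousComponent j p) = 0 := by
    intro j hj
    rw [hMmin j hj, map_zero]
  have hbM : MvPolynomial.eval w (MvPolynomial.homogeneousComponent M p) ≠ 0 := hwP
  set A : ℝ := ∑ j ∈ Finset.range (n+1), Complex.abs (MvPolynomial.eval z (MvPolynomial.homogeneousComponent j p)) with hA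
  set B : ℝ := ∑ j ∈ Finset.range (n+1), Complex.abs (MvPolynomial.eval w (MvPolynomial.homogeneousComponent j p)) with hB
  have hAnn : 0 ≤ A := Finset.sum_nonneg (fun j _ => Complex.abs.nonneg _)
  have hBnn : 0 ≤ B := Finset.sum_nonneg (fun j _ => Complex.abs.nonneg _)
  -- the decisive estimate for 0 < s ≤ 1
  have main : ∀ s : ℝ, 0 < s → s ≤ 1 → Complex.abs ((MvPolynomial.eval w (MvPolynomial.homogeneousComponent M p))) ≤ s * (B + C * A) := by
    intro s hs hs1
    have hupper : Complex.abs (MvPolynomial.eval (fun i => (s:ℂ) * z i) p) ≤ s^(M+1) * A := by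
      rw [hsum z s]
      refine le_trans (Complex.abs.sum_le _ _) ?_
      rw [hA, Finset.mul_sum]
      apply Finset.sum_le_sum
      intro j hj
      rw [map_mul, map_pow, Complex.abs_ofReal, abs_of_pos hs]
      by_cases hcj : (MvPolynomial.eval z (MvPolynomial.homogeneousComponent j p)) = 0
      · rw [hcj]; simp
      · have hjM : M + 1 ≤ j := by
          by_contra hh
          push_neg at hh
          exact hcj (hcz j (by omega))
        have : s ^ j ≤ s ^ (M+1) := pow_le_pow_of_le_one hs.le hs1 hjM
        exact mul_le_mul_of_nonneg_right this (Complex.abs.nonneg _)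
    have hlower : s^M * Complex.abs ((MvPolynomial.eval w (MvPolynomial.homogeneousComponent M p))) - s^(M+1) * B
        ≤ Complex.abs (MvPolynomial.eval (fun i => (s:ℂ) * w i) p) := by
      rw [hsum w s]
      have hMmem : M ∈ Finset.range (n+1) := Finset.mem_range.mpr (by omega)
      rw [← Finset.add_sum_erase _ _ hMmem]
      have htail : Complex.abs (∑ j ∈ (Finset.range (n+1)).erase M, (s:ℂ)^j * (MvPolynomial.eval w (MvPolynomial.homogeneousComponent j p)))
          ≤ s^(M+1) * B := by
        refine le_trans (Complex.abs.sum_le _ _) ?_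
        rw [hB, Finset.mul_sum]
        have hsub : ∑ j ∈ (Finset.range (n+1)).erase M, s^(M+1) * Complex.abs (MvPolynomial.eval w (MvPolynomial.homogeneousComponent j p))
            ≤ ∑ j ∈ Finset.range (n+1), s^(M+1) * Complex.abs (MvPolynomial.eval w (MvPolynomial.homogeneousComponent j p)) :=
          Finset.sum_le_sum_of_subset_of_nonneg (Finset.erase_subset _ _) (fun j _ _ => by positivity)
        refine le_trans ?_ hsub
        apply Finset.sum_le_sum
        intro j hj
        rw [map_mul, map_pow, Complex.abs_ofReal, abs_of_pos hs]
        by_cases hbj : (MvPolynomial.eval w (MvPolynomial.homogeneousComponent j p)) = 0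
        · rw [hbj]; simp
        · have hjne : j ≠ M := Finset.ne_of_mem_erase hj
          have hjM : M + 1 ≤ j := by
            by_contra hh
            push_neg at hh
            exact hbj (hbz j (by omega))
          have : s ^ j ≤ s ^ (M+1) := pow_le_pow_of_le_one hs.le hs1 hjM
          exact mul_le_mul_of_nonneg_right this (Complex.abs.nonneg _)
      have hhead : Complex.abs ((s:ℂ)^M * (MvPolynomial.eval w (MvPolynomial.homogeneousComponent M p))) = s^M * Complex.abs ((MvPolynomial.eval w (MvPolynomial.homogeneousComponent M p))) := by
        rw [map_mul, map_pow, Complex.abs_ofReal, abs_of_pos hs]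
      calc s^M * Complex.abs ((MvPolynomial.eval w (MvPolynomial.homogeneousComponent M p))) - s^(M+1) * B
          ≤ Complex.abs ((s:ℂ)^M * (MvPolynomial.eval w (MvPolynomial.homogeneousComponent M p))) - Complex.abs (∑ j ∈ (Finset.range (n+1)).erase M, (s:ℂ)^j * (MvPolynomial.eval w (MvPolynomial.homogeneousComponent j p))) := by
            rw [hhead]; linarith
        _ ≤ Complex.abs ((s:ℂ)^M * (MvPolynomial.eval w (MvPolynomial.homogeneousComponent M p)) + ∑ j ∈ (Finset.range (n+1)).erase M, (s:ℂ)^j * (MvPolynomial.eval w (MvPolynomial.homogeneousComponent j p))) := by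
            have := norm_sub_norm_le ((s:ℂ)^M * (MvPolynomial.eval w (MvPolynomial.homogeneousComponent M p))) (-(∑ j ∈ (Finset.range (n+1)).erase M, (s:ℂ)^j * (MvPolynomial.eval w (MvPolynomial.homogeneousComponent j p))))
            simpa [Complex.norm_eq_abs, sub_neg_eq_add, Complex.abs_ofReal] using this
    have hkey := key s hs
    have hcomb : s^M * Complex.abs ((MvPolynomial.eval w (MvPolynomial.homogeneousComponent M p))) - s^(M+1) * B ≤ C * (s^(M+1) * A) := by
      refine le_trans hlower (le_trans hkey ?_)
      exact mul_le_mul_of_nonneg_left hupper hCpos.le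
    have hsM : (0:ℝ) < s^M := pow_pos hs M
    have hpow : s^(M+1) = s^M * s := pow_succ s M
    rw [hpow] at hcomb
    have h4 : s^M * Complex.abs ((MvPolynomial.eval w (MvPolynomial.homogeneousComponent M p))) ≤ s^M * (s * (B + C * A)) := by nlinarith [hcomb]
    exact le_of_mul_le_mul_left (a := s^M) h4 hsM
  -- choose s small
  have final : ∀ X D : ℝ, 0 < X → 0 ≤ D → (∀ s : ℝ, 0 < s → s ≤ 1 → X ≤ s * D) → False := by
    intro X D hX hD hall
    have h := hall (min 1 (X / (2*D+1))) (lt_min one_pos (by positivity)) (min_le_left _ _)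
    have h2 : min 1 (X/(2*D+1)) * D ≤ (X/(2*D+1)) * D :=
      mul_le_mul_of_nonneg_right (min_le_right _ _) hD
    have h3 : (X/(2*D+1)) * D < X := by
      rw [div_mul_eq_mul_div, div_lt_iff₀ (by positivity)]
      nlinarith
    linarith
  have hbMpos : 0 < Complex.abs (MvPolynomial.eval w (MvPolynomial.homogeneousComponent M p)) := by
    rw [AbsoluteValue.pos_iff]; exact hbM
  exact final _ _ hbMpos (add_nonneg hBnn (mul_nonneg hCpos.le hAnn)) main

-- product over real negative roots
lemma neg_real_roots_prod : ∀ (s : Multiset ℂ), (∀ r ∈ s, r.im = 0 ∧ r.re < 0) →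
    ∃ γ : ℝ, 0 < γ ∧ (s.map (fun r => (0:ℂ) - r)).prod = (γ:ℂ) * (s.map (fun r => (1:ℂ) - r)).prod := by
  intro s
  induction s using Multiset.induction_on with
  | empty => exact fun _ => ⟨1, one_pos, by simp⟩
  | cons r s ih =>
    intro h
    obtain ⟨him, hre⟩ := h r (Multiset.mem_cons_self r s)
    obtain ⟨γ, hγ, hprod⟩ := ih (fun x hx => h x (Multiset.mem_cons_of_mem hx))
    refine ⟨γ * (-r.re / (1 - r.re)), mul_pos hγ (div_pos (by linarith) (by linarith)), ?_⟩
    simp only [Multiset.map_cons, Multiset.prod_cons]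
    rw [hprod]
    have hr : r = (r.re : ℂ) := by
      apply Complex.ext <;> simp [him]
    rw [hr]
    have h1 : ((1:ℂ) - (r.re:ℂ)) ≠ 0 := by
      intro hcon
      have := congrArg Complex.re hcon
      simp at this
      linarith
    push_cast
    simp only [Complex.ofReal_re]
    field_simp
    ring


lemma orthant_ne {d M : ℕ} {P : MvPolynomial (Fin d) ℂ} (hPhom : P.IsHomogeneous M)
    (hstab : ∀ z : Fin d → ℂ, (∀ i, 0 < (z i).im) → MvPolynomial.eval z P ≠ 0)
    (x : Fin d → ℝ) (hx : ∀ i, 0 < x i) : MvPolynomial.eval (fun i => (x i : ℂ)) P ≠ 0 := by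
  have h := hstab (fun i => Complex.I * (x i : ℂ)) (by
    intro i
    simpa using hx i)
  rw [eval_scale hPhom Complex.I (fun i => (x i : ℂ))] at h
  intro hcon
  exact h (by rw [hcon, mul_zero])

lemma ray_pos {d M : ℕ} {P : MvPolynomial (Fin d) ℂ} (hPhom : P.IsHomogeneous M)
    (hstab : ∀ z : Fin d → ℂ, (∀ i, 0 < (z i).im) → MvPolynomial.eval z P ≠ 0)
    (x y : Fin d → ℝ) (hx : ∀ i, 0 < x i) (hy : ∀ i, 0 < y i) :
    ∃ γ : ℝ, 0 < γ ∧ MvPolynomial.eval (fun i => (x i : ℂ)) P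
      = (γ:ℂ) * MvPolynomial.eval (fun i => ((x i : ℂ) + (y i : ℂ))) P := by
  set h : Polynomial ℂ := MvPolynomial.aeval
    (fun i => Polynomial.C ((x i : ℂ)) + Polynomial.C ((y i : ℂ)) * Polynomial.X) P with hh
  have heval : ∀ t : ℂ, h.eval t = MvPolynomial.eval (fun i => (x i : ℂ) + (y i : ℂ) * t) P := by
    intro t
    rw [hh, eval_aeval_poly]
    simp
  have h0 : h.eval 0 = MvPolynomial.eval (fun i => (x i : ℂ)) P := by
    rw [heval]
    exact congrArg (fun v => MvPolynomial.eval v P) (funext fun i => by ring)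
  have h1 : h.eval 1 = MvPolynomial.eval (fun i => ((x i : ℂ) + (y i : ℂ))) P := by
    rw [heval]
    exact congrArg (fun v => MvPolynomial.eval v P) (funext fun i => by ring)
  have hx0 : MvPolynomial.eval (fun i => (x i : ℂ)) P ≠ 0 := orthant_ne hPhom hstab x hx
  have hne : h ≠ 0 := by
    intro hcon
    apply hx0
    rw [← h0, hcon, Polynomial.eval_zero]
  have hroots : ∀ r ∈ h.roots, r.im = 0 ∧ r.re < 0 := by
    intro r hr
    have hroot : h.eval r = 0 := Polynomial.isRoot_of_mem_roots hr
    have hrne : r ≠ 0 := by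
      intro hcon
      rw [hcon, h0] at hroot
      exact hx0 hroot
    by_contra hcon2
    -- the rotation
    have hkey : 0 < r.re + Complex.abs r := by
      rcases eq_or_ne r.im 0 with him | him
      · have hre : ¬ r.re < 0 := fun hrr => hcon2 ⟨him, hrr⟩
        push_neg at hre
        have : 0 < Complex.abs r := by
          rw [AbsoluteValue.pos_iff]; exact hrne
        linarith
      · have := Complex.abs_re_lt_abs.mpr him
        have := abs_lt.mp this
        linarith
    have habs : 0 < Complex.abs r := by rw [AbsoluteValue.pos_iff]; exact hrne
    set c : ℂ := Complex.I * ((starRingEnd ℂ) r + (Complex.abs r : ℂ)) with hc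
    have hcim : c.im = r.re + Complex.abs r := by
      rw [hc]; simp
    have hcrim : (c * r).im = Complex.abs r * (Complex.abs r + r.re) := by
      have e : (starRingEnd ℂ) r * r = ((Complex.abs r : ℂ))^2 := by
        rw [mul_comm, Complex.mul_conj]
        norm_cast
        exact (Complex.sq_abs r).symm
      have e2 : c * r = Complex.I * ((((Complex.abs r)^2 : ℝ) : ℂ) + (Complex.abs r : ℂ) * r) := by
        rw [hc, mul_assoc, add_mul, e]
        push_cast
        ring
      rw [e2]
      simp [Complex.mul_im, Complex.add_im, Complex.add_re, Complex.mul_re]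
      rw [← Complex.ofReal_pow, Complex.ofReal_re]
      ring
    have hcne : c ≠ 0 := by
      intro hcon
      rw [hcon] at hcim
      simp at hcim
      linarith
    apply hstab (fun i => c * ((x i : ℂ) + (y i : ℂ) * r))
    · intro i
      have : (c * ((x i : ℂ) + (y i : ℂ) * r)).im
          = x i * c.im + y i * (c * r).im := by
        have hexp : c * ((x i : ℂ) + (y i : ℂ) * r) = c * (x i : ℂ) + (c * r) * (y i : ℂ) := by ring
        rw [hexp]
        simp [Complex.add_im, Complex.mul_im]
        ring
      rw [this, hcim, hcrim]
      have := hx i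
      have := hy i
      have h2 : 0 < Complex.abs r * (Complex.abs r + r.re) := by
        apply mul_pos habs
        linarith
      positivity
    · rw [eval_scale hPhom c, ← heval, hroot, mul_zero]
  -- factorization
  have hsplit : Multiset.card h.roots = h.natDegree :=
    Polynomial.splits_iff_card_roots.mp (IsAlgClosed.splits h)
  have hfact := Polynomial.C_leadingCoeff_mul_prod_multiset_X_sub_C (p := h) hsplit
  have he : ∀ t : ℂ, h.eval t = h.leadingCoeff * ((h.roots.map (fun r => t - r)).prod) := by
    intro t
    conv_lhs => rw [← hfact]
    rw [Polynomial.eval_mul, Polynomial.eval_C, Polynomial.eval_multiset_prod]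
    congr 1
    rw [Multiset.map_map]
    apply congrArg Multiset.prod
    apply Multiset.map_congr rfl
    intro r _
    simp
  obtain ⟨γ, hγ, hprodeq⟩ := neg_real_roots_prod h.roots hroots
  refine ⟨γ, hγ, ?_⟩
  rw [← h0, ← h1, he 0, he 1, hprodeq]
  ring

lemma eval_map_conj {d : ℕ} (q : MvPolynomial (Fin d) ℂ) (z : Fin d → ℂ) :
    MvPolynomial.eval z (MvPolynomial.map (starRingEnd ℂ) q)
      = (starRingEnd ℂ) (MvPolynomial.eval (fun i => (starRingEnd ℂ) (z i)) q) := by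
  induction q using MvPolynomial.induction_on with
  | C a => simp
  | add p q hp hq => simp [hp, hq]
  | mul_X p i hp => simp [hp]

lemma pos_real_infinite : ({w : ℂ | w.im = 0 ∧ 0 < w.re}).Infinite := by
  refine Set.infinite_of_injective_forall_mem (f := fun n : ℕ => (((n:ℝ) + 1 : ℝ) : ℂ)) ?_ ?_
  · intro a b hab
    have := congrArg Complex.re hab
    simp at this
    exact_mod_cast this
  · intro n
    constructor
    · simp
    · simp
      positivity

theorem part2 (d : ℕ) (M : ℕ) (hd : 0 < d) (P : MvPolynomial (Fin d) ℂ)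
    (hPhom : P.IsHomogeneous M)
    (hstab : ∀ z : Fin d → ℂ, (∀ i, 0 < (z i).im) → MvPolynomial.eval z P ≠ 0) :
    ∃ μ : ℂ, Complex.abs μ = 1 ∧ ∀ m : Fin d →₀ ℕ, (μ * MvPolynomial.coeff m P).im = 0 := by
  set one : Fin d → ℝ := fun _ => 1 with hone
  have honepos : ∀ i, 0 < one i := fun _ => one_pos
  set v : ℂ := MvPolynomial.eval (fun i => ((one i : ℝ) : ℂ)) P with hv
  have hvne : v ≠ 0 := orthant_ne hPhom hstab one honepos
  set μ : ℂ := (Complex.abs v : ℂ) / v with hμ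
  have habsv : Complex.abs v ≠ 0 := (Complex.abs.ne_zero_iff).mpr hvne
  have hμabs : Complex.abs μ = 1 := by
    rw [hμ, map_div₀, Complex.abs_ofReal, abs_of_nonneg (Complex.abs.nonneg v), div_self habsv]
  refine ⟨μ, hμabs, ?_⟩
  -- phase on the orthant
  have phase : ∀ x : Fin d → ℝ, (∀ i, 0 < x i) →
      ∃ γ : ℝ, MvPolynomial.eval (fun i => ((x i : ℝ) : ℂ)) P = (γ:ℂ) * v := by
    intro x hx
    obtain ⟨γ1, hγ1, e1⟩ := ray_pos hPhom hstab x one hx honepos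
    obtain ⟨γ2, hγ2, e2⟩ := ray_pos hPhom hstab one x honepos hx
    have hsw : (fun i => ((one i : ℝ) : ℂ) + ((x i : ℝ) : ℂ)) = (fun i => ((x i : ℝ) : ℂ) + ((one i : ℝ) : ℂ)) := by
      funext i; ring
    rw [hsw] at e2
    rw [← hv] at e2
    refine ⟨γ1 / γ2, ?_⟩
    have hγ2ne : (γ2 : ℂ) ≠ 0 := by
      simp only [ne_eq, Complex.ofReal_eq_zero]
      exact ne_of_gt hγ2
    rw [e1, e2]
    push_cast
    field_simp
  -- μ * P is real on the orthant
  have hreal : ∀ x : Fin d → ℝ, (∀ i, 0 < x i) →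
      (μ * MvPolynomial.eval (fun i => ((x i : ℝ) : ℂ)) P).im = 0 := by
    intro x hx
    obtain ⟨γ, hγ⟩ := phase x hx
    rw [hγ]
    have : μ * ((γ:ℂ) * v) = ((γ * Complex.abs v : ℝ) : ℂ) := by
      rw [hμ]
      field_simp
      push_cast
      ring
    rw [this, Complex.ofReal_im]
  -- conclude: the polynomial C μ * P - conj-coefficients vanishes on the positive orthant
  set Q : MvPolynomial (Fin d) ℂ :=
    MvPolynomial.C μ * P - MvPolynomial.map (starRingEnd ℂ) (MvPolynomial.C μ * P) with hQ
  have hQ0 : Q = 0 := by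
    apply vanish_on_prod d (fun _ => {w : ℂ | w.im = 0 ∧ 0 < w.re}) (fun _ => pos_real_infinite)
    intro z hz
    have hzim : ∀ i, (z i).im = 0 := fun i => (hz i).1
    have hzre : ∀ i, 0 < (z i).re := fun i => (hz i).2
    have hzeq : (fun i => (((z i).re : ℝ) : ℂ)) = z := by
      funext i
      apply Complex.ext
      · simp
      · simp [hzim i]
    have hconjz : (fun i => (starRingEnd ℂ) (z i)) = z := by
      funext i
      rw [Complex.conj_eq_iff_im]
      exact hzim i
    rw [hQ, map_sub, eval_map_conj, hconjz]
    have heC : MvPolynomial.eval z (MvPolynomial.C μ * P) = μ * MvPolynomial.eval z P := by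
      rw [map_mul, MvPolynomial.eval_C]
    rw [heC]
    have himz : (μ * MvPolynomial.eval z P).im = 0 := by
      have := hreal (fun i => (z i).re) hzre
      rwa [hzeq] at this
    rw [sub_eq_zero]
    exact ((Complex.conj_eq_iff_im).mpr himz).symm
  intro m
  have hco := congrArg (MvPolynomial.coeff m) hQ0
  rw [hQ] at hco
  simp only [MvPolynomial.coeff_sub, MvPolynomial.coeff_zero, MvPolynomial.coeff_map] at hco
  rw [sub_eq_zero] at hco
  rw [MvPolynomial.coeff_C_mul] at hco
  exact (Complex.conj_eq_iff_im).mp hco.symm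


/-- **Homogeneous Expansions (Theorem, part a).**
If `p ∈ ℂ[z₁,…,z_d]` has no zeros in `ℍ^d`, `p(0) = 0`, and `M` is the order of
vanishing of `p` at `0` (so the homogeneous expansion is `p = Σ_{j=M}^n P_j` with
`P_M ≢ 0`), then `P_M` has no zeros in `ℍ^d` and there is a unimodular `μ` such that
`μ P_M` has real coefficients. -/
theorem stable_homogeneous_expansion (d : ℕ) (p : MvPolynomial (Fin d) ℂ) (M : ℕ)
    (hstable : ∀ z : Fin d → ℂ, (∀ i, 0 < (z i).im) → MvPolynomial.eval z p ≠ 0)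
    (hp0 : MvPolynomial.eval (0 : Fin d → ℂ) p = 0)
    (hM : MvPolynomial.homogeneousComponent M p ≠ 0)
    (hMmin : ∀ j < M, MvPolynomial.homogeneousComponent j p = 0) :
    (∀ z : Fin d → ℂ, (∀ i, 0 < (z i).im) →
      MvPolynomial.eval z (MvPolynomial.homogeneousComponent M p) ≠ 0) ∧
    ∃ μ : ℂ, ‖μ‖ = 1 ∧
      ∀ m : Fin d →₀ ℕ,
        (μ * MvPolynomial.coeff m (MvPolynomial.homogeneousComponent M p)).im = 0 := by
  rcases Nat.eq_zero_or_pos d with hd | hd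
  · subst hd
    exact absurd hp0 (hstable 0 (fun i => i.elim0))
  · have h1 := part1 d p M hd hstable hM hMmin
    exact ⟨h1, part2 d M hd _ (MvPolynomial.homogeneousComponent_isHomogeneous M p) h1⟩
end

section
/- Let p ∈ ℂ[z₁,…,z_d] be pure stable with p(0) = 0 and order of vanishing M at 0, normalized (by multiplying by a unimodular constant) so that the lowest homogeneous term P_M has real coefficients. Write p = A + iB where A, B are polynomials with real coefficients. Then the lowest order homogeneous term of A equals P_M (i.e., A_M = P_M and B_M ≡ 0), and B vanishes to order exactly M+1 at 0 (i.e., B_{M+1} ≢ 0). -/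
section Aux1
open MvPolynomial
-- realness lemmas
lemma map_conj_eq_self {d : ℕ} (f : MvPolynomial (Fin d) ℂ)
    (hf : ∀ m, (MvPolynomial.coeff m f).im = 0) :
    MvPolynomial.map (starRingEnd ℂ) f = f := by
  ext m
  rw [MvPolynomial.coeff_map, Complex.conj_eq_iff_im]
  exact hf m

lemma conj_eval {d : ℕ} (f : MvPolynomial (Fin d) ℂ) (x : Fin d → ℂ) :
    (starRingEnd ℂ) (MvPolynomial.eval x f)
      = MvPolynomial.eval (fun i => (starRingEnd ℂ) (x i)) (MvPolynomial.map (starRingEnd ℂ) f) := by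
  rw [MvPolynomial.eval_map]
  rw [show MvPolynomial.eval x f = MvPolynomial.eval₂ (RingHom.id ℂ) x f from rfl]
  rw [MvPolynomial.eval₂_comp_left (starRingEnd ℂ) (RingHom.id ℂ) x f]
  rfl

lemma real_eval {d : ℕ} (f : MvPolynomial (Fin d) ℂ)
    (hf : ∀ m, (MvPolynomial.coeff m f).im = 0) (x : Fin d → ℂ)
    (hx : ∀ i, (x i).im = 0) : (MvPolynomial.eval x f).im = 0 := by
  have hx' : (fun i => (starRingEnd ℂ) (x i)) = x := by
    funext i; rw [Complex.conj_eq_iff_im]; exact hx i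
  rw [← Complex.conj_eq_iff_im, conj_eval, map_conj_eq_self f hf, hx']

end Aux1

section Aux2
open Polynomial

noncomputable def lineRestrict {d : ℕ} (α : Fin d → ℂ) (f : MvPolynomial (Fin d) ℂ) : Polynomial ℂ :=
  MvPolynomial.aeval (fun i => Polynomial.C (α i) * Polynomial.X) f

lemma lineRestrict_coeff {d : ℕ} (α : Fin d → ℂ) (f : MvPolynomial (Fin d) ℂ) (j : ℕ) :
    (lineRestrict α f).coeff j = MvPolynomial.eval α (MvPolynomial.homogeneousComponent j f) := by
  induction f using MvPolynomial.induction_on' with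
  | monomial u c =>
    rw [lineRestrict, MvPolynomial.aeval_monomial]
    have h1 : (u.prod fun i k => (Polynomial.C (α i) * Polynomial.X) ^ k)
        = Polynomial.C (u.prod fun i k => (α i) ^ k) * Polynomial.X ^ u.degree := by
      rw [Finsupp.prod, Finsupp.prod, Finsupp.degree]
      simp only [mul_pow, ← Polynomial.C_pow]
      rw [Finset.prod_mul_distrib, Finset.prod_pow_eq_pow_sum]
      rw [← map_prod]
      rfl
    rw [h1]
    have halg : (algebraMap ℂ ℂ[X]) c = Polynomial.C c := rfl
    rw [halg, ← mul_assoc, ← Polynomial.C_mul]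
    rw [Polynomial.coeff_C_mul, Polynomial.coeff_X_pow]
    have hmono : MvPolynomial.homogeneousComponent j (MvPolynomial.monomial u c)
        = if j = u.degree then MvPolynomial.monomial u c else 0 :=
      MvPolynomial.homogeneousComponent_of_mem
        ((MvPolynomial.mem_homogeneousSubmodule _ _).2
          (MvPolynomial.isHomogeneous_monomial c rfl))
    rw [hmono]
    by_cases h : j = u.degree
    · rw [if_pos h, if_pos h, MvPolynomial.eval_monomial, mul_one]
    · rw [if_neg h, if_neg h, map_zero, mul_zero]
  | add f g hf hg =>
    rw [lineRestrict, map_add, Polynomial.coeff_add, map_add, map_add]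
    exact congrArg₂ (· + ·) hf hg

lemma lineRestrict_eval {d : ℕ} (α : Fin d → ℂ) (f : MvPolynomial (Fin d) ℂ) (t : ℂ) :
    (lineRestrict α f).eval t = MvPolynomial.eval (fun i => t * α i) f := by
  have h := congrFun (congrArg DFunLike.coe
    (MvPolynomial.comp_aeval (R := ℂ) (f := fun i => Polynomial.C (α i) * Polynomial.X)
      (Polynomial.aeval t))) f
  simp only [AlgHom.coe_comp, Function.comp_apply] at h
  have h3 : (fun i => (Polynomial.aeval t) (Polynomial.C (α i) * Polynomial.X)) = fun i => t * α i := by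
    funext i
    rw [map_mul, Polynomial.aeval_C, Polynomial.aeval_X, Algebra.algebraMap_self,
      RingHom.id_apply, mul_comm]
  have h4 : (lineRestrict α f).eval t
      = (Polynomial.aeval t) ((MvPolynomial.aeval fun i => Polynomial.C (α i) * Polynomial.X) f) := by
    rw [lineRestrict]; rfl
  rw [h4, h, h3, MvPolynomial.aeval_def, Algebra.algebraMap_self]
  rfl

end Aux2

section Aux3

lemma density_lemma : ∀ (d : ℕ) (f : MvPolynomial (Fin d) ℂ),
    (∀ x : Fin d → ℝ, (∀ i, 0 < x i) → MvPolynomial.eval (fun i => (x i : ℂ)) f = 0) → f = 0 := by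
  intro d
  induction d with
  | zero =>
    intro f hf
    obtain ⟨c, rfl⟩ := MvPolynomial.C_surjective (Fin 0) f
    have := hf (fun i => 1) (fun i => one_pos)
    rw [MvPolynomial.eval_C] at this
    rw [this, map_zero]
  | succ n ih =>
    intro f hf
    have hF : ∀ k, (MvPolynomial.finSuccEquiv ℂ n f).coeff k = 0 := by
      intro k
      apply ih
      intro x hx
      set P : Polynomial ℂ :=
        Polynomial.map (MvPolynomial.eval (fun i => (x i : ℂ))) (MvPolynomial.finSuccEquiv ℂ n f)
        with hP
      have hProots : ∀ y : ℝ, 0 < y → P.IsRoot (y : ℂ) := by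
        intro y hy
        have := hf (Fin.cons y x) (fun i => Fin.cases hy hx i)
        have hc : (fun i : Fin (n+1) => ((Fin.cons y x : Fin (n+1) → ℝ) i : ℂ))
            = Fin.cons (y : ℂ) (fun i => (x i : ℂ)) := by
          funext i
          refine Fin.cases ?_ (fun j => ?_) i <;> simp
        rw [hc, MvPolynomial.eval_eq_eval_mv_eval'] at this
        exact this
      have hPzero : P = 0 := by
        apply Polynomial.eq_zero_of_infinite_isRoot
        apply Set.Infinite.mono (s := ((↑) : ℝ → ℂ) '' (Set.Ioi (0:ℝ)))
        · rintro z ⟨y, hy, rfl⟩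
          exact hProots y hy
        · exact Set.Infinite.image (fun a _ b _ h => Complex.ofReal_injective h)
            (Set.Ioi_infinite 0)
      have := congrArg (fun q => Polynomial.coeff q k) hPzero
      simpa [hP] using this
    have : MvPolynomial.finSuccEquiv ℂ n f = 0 := Polynomial.ext fun k => by rw [hF k]; simp
    have h2 := congrArg (MvPolynomial.finSuccEquiv ℂ n).symm this
    rwa [AlgEquiv.symm_apply_apply, map_zero] at h2

end Aux3

section Aux4
open Polynomial

lemma multiset_sum_nonpos_zero : ∀ (s : Multiset ℝ), (∀ x ∈ s, x ≤ 0) → s.sum = 0 →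
    ∀ x ∈ s, x = 0 := by
  intro s
  induction s using Multiset.induction_on with
  | empty => intro _ _ x hx; exact absurd hx (Multiset.notMem_zero x)
  | cons a t ih =>
    intro hle hsum x hx
    rw [Multiset.sum_cons] at hsum
    have hts : t.sum ≤ 0 := by
      have := Multiset.sum_nonneg (s := t.map (fun x => -x)) (by
        intro y hy
        obtain ⟨z, hz, rfl⟩ := Multiset.mem_map.1 hy
        simpa using hle z (Multiset.mem_cons_of_mem hz))
      rw [Multiset.sum_map_neg'] at this
      linarith
    have ha : a ≤ 0 := hle a (Multiset.mem_cons_self a t)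
    have ha0 : a = 0 := le_antisymm ha (by linarith)
    rw [Multiset.mem_cons] at hx
    rcases hx with rfl | hx
    · exact ha0
    · exact ih (fun y hy => hle y (Multiset.mem_cons_of_mem hy))
        (by linarith) x hx

lemma ratio_lemma : ∀ (s : Multiset ℂ), (0 : ℂ) ∉ s →
    ((s.map fun r => X - C r).prod.coeff 0 ≠ 0 ∧
     (s.map fun r => X - C r).prod.coeff 1 / (s.map fun r => X - C r).prod.coeff 0
       = (s.map fun r => -r⁻¹).sum) := by
  intro s
  induction s using Multiset.induction_on with
  | empty => intro _; simp [Polynomial.coeff_one]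
  | cons r t ih =>
    intro h0
    have hr : r ≠ 0 := fun h => h0 (h ▸ Multiset.mem_cons_self r t)
    obtain ⟨ha, hratio⟩ := ih (fun h => h0 (Multiset.mem_cons_of_mem h))
    set h := (t.map fun r => X - C r).prod with hh
    have hmc : ((r ::ₘ t).map fun r => X - C r).prod = (X - C r) * h := by
      rw [Multiset.map_cons, Multiset.prod_cons]
    have hc0 : ((X - C r) * h).coeff 0 = (-r) * h.coeff 0 := by
      rw [Polynomial.mul_coeff_zero]; simp
    have hc1 : ((X - C r) * h).coeff 1 = (-r) * h.coeff 1 + h.coeff 0 := by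
      rw [sub_mul, Polynomial.coeff_sub, show (1:ℕ) = 0 + 1 from rfl,
        Polynomial.coeff_X_mul, Polynomial.coeff_C_mul]
      ring
    constructor
    · rw [hmc, hc0]; exact mul_ne_zero (neg_ne_zero.2 hr) ha
    · rw [hmc, hc0, hc1, Multiset.map_cons, Multiset.sum_cons, ← hratio]
      field_simp
      ring

lemma univariate_core (q : Polynomial ℂ) (M : ℕ)
    (hstab : ∀ t : ℂ, 0 < t.im → q.eval t ≠ 0)
    (hlow : ∀ j < M, q.coeff j = 0)
    (hM0 : q.coeff M ≠ 0) (hMre : (q.coeff M).im = 0)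
    (hM1re : (q.coeff (M+1)).im = 0) :
    ∀ j, (q.coeff j).im = 0 := by
  obtain ⟨g, hg⟩ : (X : Polynomial ℂ) ^ M ∣ q := (Polynomial.X_pow_dvd_iff).2 hlow
  have hcoeff : ∀ j, g.coeff j = q.coeff (j + M) := by
    intro j
    rw [hg, Polynomial.coeff_X_pow_mul]
  have ha0 : g.coeff 0 ≠ 0 := by rw [hcoeff]; simpa using hM0
  have hare : (g.coeff 0).im = 0 := by rw [hcoeff]; simpa using hMre
  have hbre : (g.coeff 1).im = 0 := by rw [hcoeff, add_comm]; exact hM1re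
  have hgne : g ≠ 0 := fun h => ha0 (by rw [h]; simp)
  -- roots of g
  have hroots_im : ∀ r ∈ g.roots, r.im ≤ 0 := by
    intro r hr
    by_contra hpos
    push_neg at hpos
    apply hstab r hpos
    rw [hg, Polynomial.eval_mul, show Polynomial.eval r g = 0 from (Polynomial.mem_roots hgne).1 hr, mul_zero]
  have hroots_ne : (0 : ℂ) ∉ g.roots := by
    intro h0
    have h2 : Polynomial.eval 0 g = 0 := (Polynomial.mem_roots hgne).1 h0
    rw [← Polynomial.coeff_zero_eq_eval_zero] at h2
    exact ha0 h2
  have hsplits : Polynomial.Splits g := IsAlgClosed.splits g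
  have hcard : g.roots.card = g.natDegree := (Polynomial.splits_iff_card_roots).1 hsplits
  have hfac : Polynomial.C g.leadingCoeff * (g.roots.map fun r => X - C r).prod = g :=
    Polynomial.C_leadingCoeff_mul_prod_multiset_X_sub_C hcard
  set h : Polynomial ℂ := (g.roots.map fun r => X - C r).prod with hh
  obtain ⟨hh0, hhr⟩ := ratio_lemma g.roots hroots_ne
  have hlc : g.leadingCoeff ≠ 0 := Polynomial.leadingCoeff_ne_zero.2 hgne
  have hgj : ∀ j, g.coeff j = g.leadingCoeff * h.coeff j := by
    intro j
    conv_lhs => rw [← hfac]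
    rw [Polynomial.coeff_C_mul]
  -- ratio real
  have hdiv_im : ((g.coeff 1) / (g.coeff 0)).im = 0 := by
    rw [Complex.div_im, hbre, hare]
    simp
  have hratio_eq : (g.coeff 1) / (g.coeff 0) = h.coeff 1 / h.coeff 0 := by
    rw [hgj 1, hgj 0, mul_div_mul_left _ _ hlc]
  have hsum_im : ((g.roots.map fun r => -r⁻¹).sum).im = 0 := by
    rw [← hhr, ← hratio_eq]
    exact hdiv_im
  -- each root is real
  have hroots_real : ∀ r ∈ g.roots, r.im = 0 := by
    have hmap : ((g.roots.map fun r => -r⁻¹).map Complex.im).sum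
        = ((g.roots.map fun r => -r⁻¹).sum).im := by
      exact (map_multiset_sum Complex.imAddGroupHom _).symm
    have him_eq : ∀ r ∈ g.roots, (-r⁻¹).im = r.im / Complex.normSq r := by
      intro r hr
      rw [Complex.neg_im, Complex.inv_im, neg_div, neg_neg]
    have hzero := multiset_sum_nonpos_zero ((g.roots.map fun r => -r⁻¹).map Complex.im)
      (by
        intro x hx
        rw [Multiset.map_map] at hx
        obtain ⟨r, hr, rfl⟩ := Multiset.mem_map.1 hx
        simp only [Function.comp_apply]
        rw [him_eq r hr]
        apply div_nonpos_of_nonpos_of_nonneg (hroots_im r hr) (Complex.normSq_nonneg r))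
      (by rw [hmap, hsum_im])
    intro r hr
    have hrne : r ≠ 0 := fun h => hroots_ne (h ▸ hr)
    have hmem : (-r⁻¹).im ∈ (g.roots.map fun r => -r⁻¹).map Complex.im := by
      rw [Multiset.map_map]
      exact Multiset.mem_map_of_mem _ hr
    have := hzero _ hmem
    rw [him_eq r hr, _root_.div_eq_zero_iff] at this
    rcases this with h1 | h1
    · exact h1
    · exact absurd h1 (Complex.normSq_pos.2 hrne).ne'
  -- h has real coefficients
  have hhconj : h.map (starRingEnd ℂ) = h := by
    rw [hh, Polynomial.map_multiset_prod, Multiset.map_map]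
    congr 1
    apply Multiset.map_congr rfl
    intro r hr
    simp only [Function.comp_apply, Polynomial.map_sub, Polynomial.map_X, Polynomial.map_C]
    rw [Complex.conj_eq_iff_im.2 (hroots_real r hr)]
  have hhre : ∀ j, (h.coeff j).im = 0 := by
    intro j
    rw [← Complex.conj_eq_iff_im]
    have := congrArg (fun p => Polynomial.coeff p j) hhconj
    simpa [Polynomial.coeff_map] using this
  -- leading coeff real
  have hlcre : g.leadingCoeff.im = 0 := by
    have : g.leadingCoeff = g.coeff 0 / h.coeff 0 := by
      rw [hgj 0, mul_div_assoc, div_self hh0, mul_one]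
    rw [this, Complex.div_im, hare, hhre 0]
    simp
  -- conclude
  intro j
  rcases lt_or_ge j M with hj | hj
  · rw [hlow j hj]; rfl
  · obtain ⟨k, rfl⟩ := Nat.exists_eq_add_of_le hj
    rw [show M + k = k + M from add_comm M k, ← hcoeff, hgj k, Complex.mul_im,
      hlcre, hhre k]
    simp

end Aux4

/-- **Proposition (lowest homogeneous terms of a pure stable polynomial).**
Let `p ∈ ℂ[z₁,…,z_d]` be pure stable (no zeros in `ℍ^d` and no common nonconstant
factor with its reflection `p̄ = map conj p`), with `p(0) = 0` and order of vanishing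
`M` at `0`, normalized so that `P_M = homogeneousComponent M p` has real coefficients.
Writing `p = A + iB` with `A, B` real-coefficient polynomials, the lowest order
homogeneous term of `A` equals `P_M` (so `A_M = P_M` and `B_M = 0`), and `B` vanishes
to order exactly `M+1` at `0` (i.e. `B_j = 0` for `j < M+1` and `B_{M+1} ≠ 0`). -/
theorem pure_stable_real_imaginary_lowest_terms (d : ℕ)
    (p A B : MvPolynomial (Fin d) ℂ) (M : ℕ)
    (hstable : ∀ z : Fin d → ℂ, (∀ i, 0 < (z i).im) → MvPolynomial.eval z p ≠ 0)
    (hpure : ∀ r : MvPolynomial (Fin d) ℂ,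
      r ∣ p → r ∣ MvPolynomial.map (starRingEnd ℂ) p → IsUnit r)
    (hp0 : MvPolynomial.eval (0 : Fin d → ℂ) p = 0)
    (hM : MvPolynomial.homogeneousComponent M p ≠ 0)
    (hMmin : ∀ j < M, MvPolynomial.homogeneousComponent j p = 0)
    (hPMreal : ∀ m : Fin d →₀ ℕ,
      (MvPolynomial.coeff m (MvPolynomial.homogeneousComponent M p)).im = 0)
    (hAreal : ∀ m : Fin d →₀ ℕ, (MvPolynomial.coeff m A).im = 0)
    (hBreal : ∀ m : Fin d →₀ ℕ, (MvPolynomial.coeff m B).im = 0)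
    (hp : p = A + MvPolynomial.C Complex.I * B) :
    MvPolynomial.homogeneousComponent M A = MvPolynomial.homogeneousComponent M p ∧
    MvPolynomial.homogeneousComponent M B = 0 ∧
    (∀ j < M + 1, MvPolynomial.homogeneousComponent j B = 0) ∧
    MvPolynomial.homogeneousComponent (M + 1) B ≠ 0 := by
  -- coefficient realness of homogeneous components
  have hcompA : ∀ (j : ℕ) (m : Fin d →₀ ℕ),
      (MvPolynomial.coeff m (MvPolynomial.homogeneousComponent j A)).im = 0 := by
    intro j m
    rw [MvPolynomial.coeff_homogeneousComponent]
    split_ifs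
    · exact hAreal m
    · rfl
  have hcompB : ∀ (j : ℕ) (m : Fin d →₀ ℕ),
      (MvPolynomial.coeff m (MvPolynomial.homogeneousComponent j B)).im = 0 := by
    intro j m
    rw [MvPolynomial.coeff_homogeneousComponent]
    split_ifs
    · exact hBreal m
    · rfl
  -- decomposition of homogeneous components
  have hcomp : ∀ j : ℕ, MvPolynomial.homogeneousComponent j p
      = MvPolynomial.homogeneousComponent j A
        + MvPolynomial.C Complex.I * MvPolynomial.homogeneousComponent j B := by
    intro j
    rw [hp, map_add, MvPolynomial.homogeneousComponent_C_mul]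
  have hcoeffs : ∀ (j : ℕ) (m : Fin d →₀ ℕ),
      MvPolynomial.coeff m (MvPolynomial.homogeneousComponent j p)
        = MvPolynomial.coeff m (MvPolynomial.homogeneousComponent j A)
          + Complex.I * MvPolynomial.coeff m (MvPolynomial.homogeneousComponent j B) := by
    intro j m
    rw [hcomp j, MvPolynomial.coeff_add, MvPolynomial.coeff_C_mul]
  -- B_M = 0
  have hBM : MvPolynomial.homogeneousComponent M B = 0 := by
    ext m
    have h1 := hPMreal m
    rw [hcoeffs M m] at h1
    rw [Complex.add_im, Complex.mul_im, Complex.I_re, Complex.I_im, hcompA M m,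
      hcompB M m] at h1
    simp only [zero_mul, one_mul, mul_zero, zero_add, add_zero] at h1
    rw [MvPolynomial.coeff_zero]
    exact Complex.ext h1 (hcompB M m)
  -- B_j = 0 for j < M
  have hBlow : ∀ j < M, MvPolynomial.homogeneousComponent j B = 0 := by
    intro j hj
    ext m
    have h1 := congrArg (MvPolynomial.coeff m) (hMmin j hj)
    rw [hcoeffs j m, MvPolynomial.coeff_zero] at h1
    have him := congrArg Complex.im h1
    rw [Complex.add_im, Complex.mul_im, Complex.I_re, Complex.I_im, hcompA j m,
      hcompB j m] at him
    simp only [zero_mul, one_mul, mul_zero, zero_add, add_zero, Complex.zero_im] at him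
    rw [MvPolynomial.coeff_zero]
    exact Complex.ext him (hcompB j m)
  have hAM : MvPolynomial.homogeneousComponent M A = MvPolynomial.homogeneousComponent M p := by
    rw [hcomp M, hBM, mul_zero, add_zero]
  refine ⟨hAM, hBM, ?_, ?_⟩
  · intro j hj
    rcases lt_or_eq_of_le (Nat.lt_succ_iff.1 hj) with h | h
    · exact hBlow j h
    · rw [h]; exact hBM
  -- the hard part
  intro hB1
  -- B * P_M vanishes on the positive orthant
  have hBP : B * MvPolynomial.homogeneousComponent M p = 0 := by
    apply density_lemma
    intro x hx
    set α : Fin d → ℂ := fun i => (x i : ℂ) with hα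
    rw [map_mul]
    by_cases hc : MvPolynomial.eval α (MvPolynomial.homogeneousComponent M p) = 0
    · rw [hc, mul_zero]
    · suffices hB0 : MvPolynomial.eval α B = 0 by rw [hB0, zero_mul]
      set q := lineRestrict α p with hq
      have hαim : ∀ i, (α i).im = 0 := fun i => Complex.ofReal_im (x i)
      have hqreal : ∀ j, (q.coeff j).im = 0 := by
        apply univariate_core q M
        · intro t ht
          rw [hq, lineRestrict_eval]
          apply hstable
          intro i
          have : (t * α i).im = t.im * x i := by
            rw [Complex.mul_im, hαim i, mul_zero, zero_add]
            rfl
          rw [this]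
          exact mul_pos ht (hx i)
        · intro j hj
          rw [hq, lineRestrict_coeff, hMmin j hj, map_zero]
        · rw [hq, lineRestrict_coeff]; exact hc
        · rw [hq, lineRestrict_coeff]
          exact real_eval _ hPMreal α hαim
        · rw [hq, lineRestrict_coeff]
          have : MvPolynomial.homogeneousComponent (M+1) p
              = MvPolynomial.homogeneousComponent (M+1) A := by
            rw [hcomp (M+1), hB1, mul_zero, add_zero]
          rw [this]
          exact real_eval _ (hcompA (M+1)) α hαim
      -- evaluate q at 1
      have hq1 : (q.eval 1).im = 0 := by
        rw [Polynomial.eval_eq_sum_range]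
        rw [Complex.im_sum]
        apply Finset.sum_eq_zero
        intro j _
        rw [one_pow, mul_one]
        exact hqreal j
      have hq1' : q.eval 1 = MvPolynomial.eval α p := by
        rw [hq, lineRestrict_eval]
        have : (fun i => 1 * α i) = α := by funext i; rw [one_mul]
        rw [this]
      have haim : (MvPolynomial.eval α A).im = 0 := real_eval A hAreal α hαim
      have hbim : (MvPolynomial.eval α B).im = 0 := real_eval B hBreal α hαim
      have hpim : (MvPolynomial.eval α p).im = 0 := by rw [← hq1']; exact hq1
      rw [hp, map_add, map_mul, MvPolynomial.eval_C] at hpim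
      rw [Complex.add_im, Complex.mul_im, Complex.I_re, Complex.I_im, haim, hbim] at hpim
      simp only [zero_mul, one_mul, mul_zero, zero_add, add_zero] at hpim
      exact Complex.ext hpim hbim
  have hB0 : B = 0 := by
    rcases mul_eq_zero.1 hBP with h | h
    · exact h
    · exact absurd h hM
  have hpA : p = A := by rw [hp, hB0, mul_zero, add_zero]
  have hconj : MvPolynomial.map (starRingEnd ℂ) p = p := by
    rw [hpA]; exact map_conj_eq_self A hAreal
  have hunit : IsUnit p := hpure p dvd_rfl (by rw [hconj])
  have hconst : MvPolynomial.constantCoeff p = 0 := by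
    rw [← MvPolynomial.eval_zero]; exact hp0
  have := hunit.map (MvPolynomial.constantCoeff)
  rw [hconst] at this
  exact not_isUnit_zero this
end

section
/- Let A_M = a·z₁^r·∏_{j=1}^{M−r}(z₂ + a_j z₁) and B_{M+1} = b·z₁^s·∏_{j=1}^{M+1−s}(z₂ + b_j z₁) be two-variable homogeneous polynomials of degrees M and M+1 respectively, where a, b are nonzero real constants, 0 ≤ a₁ ≤ ⋯ ≤ a_{M−r} and 0 ≤ b₁ ≤ ⋯ ≤ b_{M+1−s}; set a_j = ∞ for j = M−r+1,…,M and b_j = ∞ for j = M+2−s,…,M+1. Suppose A_M/B_{M+1} is a Pick function, i.e., Im(A_M(z)/B_{M+1}(z)) ≥ 0 for all z ∈ ℍ². Then s = r or s = r+1, and the slopes interlace: b₁ ≤ a₁ ≤ b₂ ≤ a₂ ≤ ⋯ ≤ a_M ≤ b_{M+1}. -/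
namespace PickAux
open Complex Finset Filter Topology Set

lemma ne_zero_of_im_pos {z : ℂ} (hz : 0 < z.im) : z ≠ 0 :=
  fun h => by simp [h] at hz

lemma polar_prod {m : ℕ} (z : Fin m → ℂ) :
    ∏ j, z j = ((∏ j, ‖z j‖ : ℝ) : ℂ) *
      Complex.exp (((∑ j, (z j).arg : ℝ) : ℂ) * I) := by
  push_cast
  rw [Finset.sum_mul, Complex.exp_sum, ← Finset.prod_mul_distrib]
  exact Finset.prod_congr rfl fun j _ => (Complex.norm_mul_exp_arg_mul_I (z j)).symm

lemma sin_S_nonpos {m n : ℕ} {c : ℝ} (hc : c < 0) (u : Fin m → ℝ) (v : Fin n → ℝ)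
    (w : ℂ) (hw : 0 < w.im)
    (hg : 0 ≤ (((c : ℂ) * ∏ j, (w + (u j : ℂ))) / ∏ j, (w + (v j : ℂ))).im) :
    Real.sin ((∑ j, (w + (u j : ℂ)).arg) - ∑ j, (w + (v j : ℂ)).arg) ≤ 0 := by
  have him : ∀ x : ℝ, (0:ℝ) < (w + (x:ℂ)).im := by intro x; simpa using hw
  have hRa : (0:ℝ) < ∏ j, ‖w + (u j : ℂ)‖ :=
    Finset.prod_pos fun j _ => norm_pos_iff.mpr (ne_zero_of_im_pos (him _))
  have hRb : (0:ℝ) < ∏ j, ‖w + (v j : ℂ)‖ :=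
    Finset.prod_pos fun j _ => norm_pos_iff.mpr (ne_zero_of_im_pos (him _))
  set Ra := ∏ j, ‖w + (u j : ℂ)‖
  set Rb := ∏ j, ‖w + (v j : ℂ)‖
  set Sa := ∑ j, (w + (u j : ℂ)).arg
  set Sb := ∑ j, (w + (v j : ℂ)).arg
  have hPa : (∏ j, (w + (u j : ℂ))) = ((Ra : ℝ) : ℂ) * Complex.exp (((Sa : ℝ) : ℂ) * I) :=
    polar_prod _
  have hPb : (∏ j, (w + (v j : ℂ))) = ((Rb : ℝ) : ℂ) * Complex.exp (((Sb : ℝ) : ℂ) * I) :=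
    polar_prod _
  have key : ((c : ℂ) * ∏ j, (w + (u j : ℂ))) / ∏ j, (w + (v j : ℂ))
      = ((c * Ra / Rb : ℝ) : ℂ) * Complex.exp (((Sa - Sb : ℝ) : ℂ) * I) := by
    rw [hPa, hPb]
    rw [show ((Sa - Sb : ℝ) : ℂ) * I = (Sa:ℂ)*I - (Sb:ℂ)*I by push_cast; ring,
      Complex.exp_sub]
    have h1 : ((Rb : ℝ) : ℂ) ≠ 0 := by exact_mod_cast hRb.ne'
    have h2 : Complex.exp ((Sb:ℂ) * I) ≠ 0 := Complex.exp_ne_zero _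
    field_simp
    push_cast
    field_simp
  rw [key] at hg
  have him2 : (((c * Ra / Rb : ℝ) : ℂ) * Complex.exp (((Sa - Sb : ℝ) : ℂ) * I)).im
      = (c * Ra / Rb) * Real.sin (Sa - Sb) := by
    rw [Complex.mul_im, Complex.ofReal_re, Complex.ofReal_im, Complex.exp_ofReal_mul_I_im]
    ring
  rw [him2] at hg
  have hneg : c * Ra / Rb < 0 := div_neg_of_neg_of_pos (mul_neg_of_neg_of_pos hc hRa) hRb
  nlinarith

lemma arg_lim_top (x : ℝ) :
    Tendsto (fun R : ℝ => ((R : ℂ) + I + (x : ℂ)).arg) atTop (𝓝 0) := by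
  have habs : Tendsto (fun R : ℝ => ‖(R : ℂ) + I + (x : ℂ)‖) atTop atTop := by
    apply tendsto_atTop_mono (fun R => ?_) (tendsto_atTop_add_const_right _ x tendsto_id)
    have : ((R : ℂ) + I + (x : ℂ)).re = R + x := by simp
    calc (id R : ℝ) + x = ((R : ℂ) + I + (x : ℂ)).re := by simp
    _ ≤ ‖(R : ℂ) + I + (x : ℂ)‖ := Complex.re_le_norm _
  have hinv : Tendsto (fun R : ℝ => (‖(R : ℂ) + I + (x : ℂ)‖)⁻¹) atTop (𝓝 0) :=
    tendsto_inv_atTop_zero.comp habs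
  have harcsin : Tendsto (fun R : ℝ =>
      Real.arcsin (1 / ‖(R : ℂ) + I + (x : ℂ)‖)) atTop (𝓝 0) := by
    have := (Real.continuous_arcsin.continuousAt (x := 0)).tendsto.comp
      (by simpa [one_div] using hinv)
    simpa [Real.arcsin_zero, Function.comp_def] using this
  refine Tendsto.congr' ?_ harcsin
  filter_upwards [eventually_ge_atTop (1 - x)] with R hR
  rw [Complex.arg_of_re_nonneg (by simp; linarith)]
  congr 1
  simp

lemma arg_lim_right {x : ℝ} (hx : x ≠ 0) :
    Tendsto (fun ε : ℝ => ((x : ℂ) + (ε : ℂ) * I).arg) (𝓝[>] (0:ℝ))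
      (𝓝 (if 0 < x then 0 else Real.pi)) := by
  rcases hx.lt_or_gt with hneg | hpos
  · rw [if_neg (not_lt.mpr hneg.le)]
    have habs : ContinuousAt (fun ε : ℝ => ‖(x : ℂ) + (ε : ℂ) * I‖) 0 :=
      ContinuousAt.comp (g := fun z : ℂ => ‖z‖) (f := fun ε : ℝ => (x : ℂ) + (ε : ℂ) * I)
        continuous_norm.continuousAt (by fun_prop)
    have habs0 : ‖(x : ℂ) + ((0:ℝ) : ℂ) * I‖ ≠ 0 := by
      simp [hx]
    have haux : ContinuousAt (fun ε : ℝ =>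
        Real.arcsin (-ε / ‖(x : ℂ) + (ε : ℂ) * I‖) + Real.pi) 0 := by
      apply ContinuousAt.add _ continuousAt_const
      apply Real.continuous_arcsin.continuousAt.comp
      exact (continuousAt_id.neg).div habs habs0
    have hval : Real.arcsin (-(0:ℝ) / ‖(x : ℂ) + ((0:ℝ) : ℂ) * I‖) + Real.pi
        = Real.pi := by simp
    have htd : Tendsto (fun ε : ℝ =>
        Real.arcsin (-ε / ‖(x : ℂ) + (ε : ℂ) * I‖) + Real.pi)
        (𝓝[>] (0:ℝ)) (𝓝 Real.pi) := by
      have := haux.tendsto.mono_left (nhdsWithin_le_nhds (s := Ioi (0:ℝ)))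
      rwa [hval] at this
    refine Tendsto.congr' ?_ htd
    filter_upwards [self_mem_nhdsWithin] with ε (hε : 0 < ε)
    rw [Complex.arg_of_re_neg_of_im_nonneg (by simpa using hneg) (by simp [hε.le])]
    congr 2
    simp
  · rw [if_pos hpos]
    have hf : ContinuousAt (fun ε : ℝ => (x : ℂ) + (ε : ℂ) * I) 0 := by fun_prop
    have hslit : ((x : ℂ) + ((0:ℝ) : ℂ) * I) ∈ Complex.slitPlane := by
      simp [Complex.mem_slitPlane_iff, hpos]
    have harg : ContinuousAt (fun ε : ℝ => ((x : ℂ) + (ε : ℂ) * I).arg) 0 :=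
      ContinuousAt.comp (g := Complex.arg) (f := fun ε : ℝ => (x : ℂ) + (ε : ℂ) * I)
        (Complex.continuousAt_arg hslit) hf
  -- value at 0 is arg x = 0
    have hval : ((x : ℂ) + ((0:ℝ) : ℂ) * I).arg = 0 := by
      simp [Complex.arg_ofReal_of_nonneg hpos.le]
    have := harg.tendsto.mono_left (nhdsWithin_le_nhds (s := Ioi (0:ℝ)))
    rwa [hval] at this

lemma window {m n : ℕ} (u : Fin m → ℝ) (v : Fin n → ℝ)
    (Sf : ℂ → ℝ)
    (hSf : Sf = fun w => (∑ j, (w + (u j : ℂ)).arg) - ∑ j, (w + (v j : ℂ)).arg)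
    (hsin : ∀ w : ℂ, 0 < w.im → Real.sin (Sf w) ≤ 0) :
    ∀ w : ℂ, 0 < w.im → Sf w ∈ Icc (-Real.pi) 0 := by
  have hU : IsPreconnected {z : ℂ | 0 < z.im} :=
    (convex_halfSpace_im_gt 0).isPreconnected
  have hScont : ContinuousOn Sf {z : ℂ | 0 < z.im} := by
    rw [hSf]
    apply ContinuousOn.sub <;>
    · apply continuousOn_finset_sum
      intro j _ w hw
      apply ContinuousAt.continuousWithinAt
      refine ContinuousAt.comp (g := Complex.arg) ?_ (by fun_prop)
      exact Complex.continuousAt_arg (Or.inr (by simpa using (ne_of_gt hw)))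
  set J : Set ℝ := Sf '' {z : ℂ | 0 < z.im} with hJdef
  have hJ : IsPreconnected J := hU.image Sf hScont
  have hsinJ : ∀ y ∈ J, Real.sin y ≤ 0 := by
    rintro y ⟨w, hw, rfl⟩
    exact hsin w hw
  -- a point of J with small absolute value
  have hlim0 : Tendsto (fun R : ℝ => Sf ((R : ℂ) + I)) atTop (𝓝 0) := by
    have h1 : ∀ (k : ℕ) (z : Fin k → ℝ), Tendsto
        (fun R : ℝ => ∑ j, (((R : ℂ) + I) + (z j : ℂ)).arg) atTop (𝓝 0) := by
      intro k z
      have := tendsto_finset_sum (univ : Finset (Fin k))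
        (fun j _ => arg_lim_top (z j))
      simpa using this
    rw [hSf]
    simpa using (h1 m u).sub (h1 n v)
  obtain ⟨R₀, hR₀⟩ : ∃ R : ℝ, |Sf ((R : ℂ) + I)| < Real.pi / 2 := by
    have := (Metric.tendsto_nhds.mp hlim0 (Real.pi / 2) (by positivity)).exists
    obtain ⟨R, hR⟩ := this
    exact ⟨R, by simpa [Real.dist_eq] using hR⟩
  have hmem₀ : ((R₀ : ℂ) + I) ∈ {z : ℂ | 0 < z.im} := by simp
  have hy₀ : Sf ((R₀ : ℂ) + I) ∈ J := ⟨_, hmem₀, rfl⟩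
  set y₀ := Sf ((R₀ : ℂ) + I) with hy₀def
  have hy₀abs := abs_lt.mp hR₀
  have hy₀le : y₀ ≤ 0 := by
    by_contra h
    push_neg at h
    have := hsinJ y₀ hy₀
    have : (0:ℝ) < Real.sin y₀ :=
      Real.sin_pos_of_pos_of_lt_pi h (by linarith [Real.pi_pos, hy₀abs.2])
    linarith [hsinJ y₀ hy₀]
  intro w hw
  have hyJ : Sf w ∈ J := ⟨w, hw, rfl⟩
  set y := Sf w with hydef
  constructor
  · by_contra h
    push_neg at h
    rcases lt_or_ge (-(2 * Real.pi)) y with h1 | h1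
    · have : (0:ℝ) < Real.sin (y + 2 * Real.pi) :=
        Real.sin_pos_of_pos_of_lt_pi (by linarith) (by linarith [Real.pi_pos])
      rw [Real.sin_add_two_pi] at this
      linarith [hsinJ y hyJ]
    · have hsub : Icc y y₀ ⊆ J := hJ.Icc_subset hyJ hy₀
      have hmem : -(3 * Real.pi / 2) ∈ Icc y y₀ :=
        ⟨by linarith, by linarith [Real.pi_pos, hy₀abs.1]⟩
      have h2 : Real.sin (-(3 * Real.pi / 2)) ≤ 0 := hsinJ _ (hsub hmem)
      have h3 : Real.sin (-(3 * Real.pi / 2)) = 1 := by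
        rw [show -(3 * Real.pi / 2) = Real.pi / 2 - 2 * Real.pi by ring,
          Real.sin_sub_two_pi, Real.sin_pi_div_two]
      linarith
  · by_contra h
    push_neg at h
    rcases lt_or_ge y Real.pi with h1 | h1
    · have : (0:ℝ) < Real.sin y := Real.sin_pos_of_pos_of_lt_pi h h1
      linarith [hsinJ y hyJ]
    · have hsub : Icc y₀ y ⊆ J := hJ.Icc_subset hy₀ hyJ
      have hmem : Real.pi / 2 ∈ Icc y₀ y := ⟨by linarith [Real.pi_pos], by linarith⟩
      have h2 : Real.sin (Real.pi / 2) ≤ 0 := hsinJ _ (hsub hmem)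
      rw [Real.sin_pi_div_two] at h2
      linarith

lemma count_window {m n : ℕ} {c : ℝ} (hc : c < 0) (u : Fin m → ℝ) (v : Fin n → ℝ)
    (hg : ∀ w : ℂ, 0 < w.im →
      0 ≤ (((c : ℂ) * ∏ j, (w + (u j : ℂ))) / ∏ j, (w + (v j : ℂ))).im)
    (t : ℝ) (hu : ∀ j, u j ≠ t) (hv : ∀ j, v j ≠ t) :
    (univ.filter fun j => u j < t).card ≤ (univ.filter fun j => v j < t).card ∧
      (univ.filter fun j => v j < t).card ≤ (univ.filter fun j => u j < t).card + 1 := by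
  set Sf : ℂ → ℝ := fun w => (∑ j, (w + (u j : ℂ)).arg) - ∑ j, (w + (v j : ℂ)).arg with hSf
  have hwin : ∀ w : ℂ, 0 < w.im → Sf w ∈ Icc (-Real.pi) 0 :=
    window u v Sf hSf (fun w hw => sin_S_nonpos hc u v w hw (hg w hw))
  set Ca := (univ.filter fun j => u j < t).card with hCa
  set Cb := (univ.filter fun j => v j < t).card with hCb
  -- limit of Sf along w = -t + ε i
  have hsum : ∀ (k : ℕ) (z : Fin k → ℝ), (∀ j, z j ≠ t) → Tendsto
      (fun ε : ℝ => ∑ j, ((((-t : ℝ) : ℂ) + (ε : ℂ) * I) + (z j : ℂ)).arg) (𝓝[>] (0:ℝ))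
      (𝓝 ((univ.filter fun j => z j < t).card * Real.pi)) := by
    intro k z hz
    have hterm : ∀ j : Fin k, Tendsto
        (fun ε : ℝ => (((z j - t : ℝ) : ℂ) + (ε : ℂ) * I).arg) (𝓝[>] (0:ℝ))
        (𝓝 (if 0 < z j - t then 0 else Real.pi)) :=
      fun j => arg_lim_right (sub_ne_zero.mpr (hz j))
    have h1 := tendsto_finset_sum (univ : Finset (Fin k)) (fun j _ => hterm j)
    have h2 : (∑ j : Fin k, if 0 < z j - t then (0:ℝ) else Real.pi)
        = (univ.filter fun j => z j < t).card * Real.pi := by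
      have e : ∀ j : Fin k, (if 0 < z j - t then (0:ℝ) else Real.pi)
          = if z j < t then Real.pi else 0 := by
        intro j
        rcases (hz j).lt_or_gt with h | h
        · rw [if_neg (by linarith), if_pos h]
        · rw [if_pos (by linarith), if_neg (by linarith)]
      rw [Finset.sum_congr rfl (fun j _ => e j), ← Finset.sum_filter,
        Finset.sum_const, nsmul_eq_mul]
    rw [h2] at h1
    refine h1.congr fun ε => Finset.sum_congr rfl fun j _ => ?_
    congr 1
    push_cast
    ring
  have hlim : Tendsto (fun ε : ℝ => Sf (((-t : ℝ) : ℂ) + (ε : ℂ) * I)) (𝓝[>] (0:ℝ))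
      (𝓝 ((Ca : ℝ) * Real.pi - (Cb : ℝ) * Real.pi)) := by
    have := (hsum m u hu).sub (hsum n v hv)
    simpa [hSf] using this
  have hev : ∀ᶠ ε : ℝ in 𝓝[>] (0:ℝ), Sf (((-t : ℝ) : ℂ) + (ε : ℂ) * I) ∈ Icc (-Real.pi) 0 := by
    filter_upwards [self_mem_nhdsWithin] with ε (hε : 0 < ε)
    exact hwin _ (by simpa using hε)
  have h1 : (Ca : ℝ) * Real.pi - (Cb : ℝ) * Real.pi ≤ 0 :=
    le_of_tendsto hlim (hev.mono fun ε h => h.2)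
  have h2 : -Real.pi ≤ (Ca : ℝ) * Real.pi - (Cb : ℝ) * Real.pi :=
    ge_of_tendsto hlim (hev.mono fun ε h => h.1)
  have hpi := Real.pi_pos
  constructor
  · have : (Ca : ℝ) ≤ (Cb : ℝ) := by nlinarith
    exact_mod_cast this
  · have : (Cb : ℝ) ≤ (Ca : ℝ) + 1 := by nlinarith
    exact_mod_cast this

lemma prod_factor {k : ℕ} (u : Fin k → ℝ) (w E : ℂ) :
    (∏ j, (w * E + (u j : ℂ) * E)) = (∏ j, (w + (u j : ℂ))) * E ^ k := by
  simp only [← add_mul]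
  rw [Finset.prod_mul_distrib, Finset.prod_const, Finset.card_univ, Fintype.card_fin]

lemma slice' (M r s : ℕ) (a b : ℝ) (hrM : r ≤ M) (hsM : s ≤ M + 1)
    (aseq : Fin (M - r) → ℝ) (bseq : Fin (M + 1 - s) → ℝ)
    (hPick : ∀ z₁ z₂ : ℂ, 0 < z₁.im → 0 < z₂.im →
      0 ≤ (((a : ℂ) * z₁ ^ r * ∏ j, (z₂ + (aseq j : ℂ) * z₁)) /
            ((b : ℂ) * z₁ ^ s * ∏ j, (z₂ + (bseq j : ℂ) * z₁))).im)
    (w : ℂ) (hw : 0 < w.im) :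
    0 ≤ (((a : ℂ) * ∏ j, (w + (aseq j : ℂ))) / ((b : ℂ) * ∏ j, (w + (bseq j : ℂ)))).im := by
  set G : ℂ := ((a : ℂ) * ∏ j, (w + (aseq j : ℂ))) / ((b : ℂ) * ∏ j, (w + (bseq j : ℂ)))
    with hGdef
  set E : ℝ → ℂ := fun θ => Complex.exp ((θ : ℂ) * I) with hEdef
  have hEne : ∀ θ : ℝ, E θ ≠ 0 := fun θ => Complex.exp_ne_zero _
  have hkey : ∀ θ : ℝ, 0 < Real.sin θ → 0 < (w * E θ).im → 0 ≤ (G / E θ).im := by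
    intro θ h1 h2
    have h3 : 0 < (E θ).im := by
      simpa [hEdef, Complex.exp_ofReal_mul_I_im] using h1
    have h4 := hPick (E θ) (w * E θ) h3 h2
    rw [prod_factor aseq (w) (E θ), prod_factor bseq (w) (E θ)] at h4
    have e1 : (a : ℂ) * E θ ^ r * ((∏ j, (w + (aseq j : ℂ))) * E θ ^ (M - r))
        = ((a : ℂ) * ∏ j, (w + (aseq j : ℂ))) * E θ ^ M := by
      calc (a : ℂ) * E θ ^ r * ((∏ j, (w + (aseq j : ℂ))) * E θ ^ (M - r))
          = ((a : ℂ) * ∏ j, (w + (aseq j : ℂ))) * (E θ ^ r * E θ ^ (M - r)) := by ring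
      _ = _ := by rw [← pow_add, Nat.add_sub_cancel' hrM]
    have e2 : (b : ℂ) * E θ ^ s * ((∏ j, (w + (bseq j : ℂ))) * E θ ^ (M + 1 - s))
        = (((b : ℂ) * ∏ j, (w + (bseq j : ℂ))) * E θ ^ M) * E θ := by
      calc (b : ℂ) * E θ ^ s * ((∏ j, (w + (bseq j : ℂ))) * E θ ^ (M + 1 - s))
          = ((b : ℂ) * ∏ j, (w + (bseq j : ℂ))) * (E θ ^ s * E θ ^ (M + 1 - s)) := by ring
      _ = ((b : ℂ) * ∏ j, (w + (bseq j : ℂ))) * E θ ^ (M + 1) := by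
          rw [← pow_add, Nat.add_sub_cancel' hsM]
      _ = _ := by rw [pow_succ]; ring
    rw [e1, e2] at h4
    have e3 : (((a : ℂ) * ∏ j, (w + (aseq j : ℂ))) * E θ ^ M)
        / ((((b : ℂ) * ∏ j, (w + (bseq j : ℂ))) * E θ ^ M) * E θ) = G / E θ := by
      rw [← div_div, mul_div_mul_right _ _ (pow_ne_zero M (hEne θ)), hGdef]
    rwa [e3] at h4
  have hcont : Tendsto (fun θ : ℝ => (G / E θ).im) (𝓝[>] (0:ℝ)) (𝓝 ((G / E 0).im)) := by
    have c1 : Continuous fun θ : ℝ => G / E θ := by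
      apply continuous_const.div _ hEne
      exact Complex.continuous_exp.comp (by fun_prop)
    exact ((Complex.continuous_im.comp c1).continuousAt).tendsto.mono_left nhdsWithin_le_nhds
  have hG0 : (G / E 0).im = G.im := by
    simp [hEdef]
  have hev : ∀ᶠ θ : ℝ in 𝓝[>] (0:ℝ), 0 ≤ (G / E θ).im := by
    have hev1 : ∀ᶠ θ : ℝ in 𝓝[>] (0:ℝ), θ ∈ Ioo (0:ℝ) Real.pi :=
      Ioo_mem_nhdsGT_of_mem ⟨le_refl 0, Real.pi_pos⟩
    have hc2 : ContinuousAt (fun θ : ℝ => (w * E θ).im) 0 := by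
      apply Continuous.continuousAt
      apply Complex.continuous_im.comp
      exact continuous_const.mul (Complex.continuous_exp.comp (by fun_prop))
    have h02 : 0 < (w * E 0).im := by simpa [hEdef] using hw
    have hev2 : ∀ᶠ θ : ℝ in 𝓝 (0:ℝ), 0 < (w * E θ).im :=
      hc2.eventually (eventually_gt_nhds h02)
    filter_upwards [hev1, hev2.filter_mono nhdsWithin_le_nhds] with θ hθ1 hθ2
    exact hkey θ (Real.sin_pos_of_pos_of_lt_pi hθ1.1 hθ1.2) hθ2
  have := ge_of_tendsto hcont hev
  rwa [hG0] at this

lemma c_neg' (M r s : ℕ) (a b : ℝ) (hrM : r ≤ M) (hsM : s ≤ M + 1) (ha : a ≠ 0) (hb : b ≠ 0)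
    (aseq : Fin (M - r) → ℝ) (bseq : Fin (M + 1 - s) → ℝ)
    (haseq0 : ∀ j, 0 ≤ aseq j) (hbseq0 : ∀ j, 0 ≤ bseq j)
    (hPick : ∀ z₁ z₂ : ℂ, 0 < z₁.im → 0 < z₂.im →
      0 ≤ (((a : ℂ) * z₁ ^ r * ∏ j, (z₂ + (aseq j : ℂ) * z₁)) /
            ((b : ℂ) * z₁ ^ s * ∏ j, (z₂ + (bseq j : ℂ) * z₁))).im) :
    a / b < 0 := by
  have h := hPick I I (by simp) (by simp)
  have hq : ∀ q : ℝ, I + (q : ℂ) * I = ((1 + q : ℝ) : ℂ) * I := fun q => by push_cast; ring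
  simp only [hq] at h
  rw [Finset.prod_mul_distrib, Finset.prod_mul_distrib, Finset.prod_const, Finset.prod_const,
    Finset.card_univ, Finset.card_univ, Fintype.card_fin, Fintype.card_fin] at h
  set qa : ℝ := ∏ j, (1 + aseq j) with hqa
  set qb : ℝ := ∏ j, (1 + bseq j) with hqb
  have hqa' : (∏ j, ((1 + aseq j : ℝ) : ℂ)) = ((qa : ℝ) : ℂ) := by rw [hqa]; push_cast; rfl
  have hqb' : (∏ j, ((1 + bseq j : ℝ) : ℂ)) = ((qb : ℝ) : ℂ) := by rw [hqb]; push_cast; rfl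
  rw [hqa', hqb'] at h
  have hIne : (I : ℂ) ≠ 0 := Complex.I_ne_zero
  have e1 : (a : ℂ) * I ^ r * (((qa : ℝ) : ℂ) * I ^ (M - r))
      = ((a : ℂ) * ((qa : ℝ) : ℂ)) * I ^ M := by
    calc (a : ℂ) * I ^ r * (((qa : ℝ) : ℂ) * I ^ (M - r))
        = ((a : ℂ) * ((qa : ℝ) : ℂ)) * (I ^ r * I ^ (M - r)) := by ring
    _ = _ := by rw [← pow_add, Nat.add_sub_cancel' hrM]
  have e2 : (b : ℂ) * I ^ s * (((qb : ℝ) : ℂ) * I ^ (M + 1 - s))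
      = (((b : ℂ) * ((qb : ℝ) : ℂ)) * I ^ M) * I := by
    calc (b : ℂ) * I ^ s * (((qb : ℝ) : ℂ) * I ^ (M + 1 - s))
        = ((b : ℂ) * ((qb : ℝ) : ℂ)) * (I ^ s * I ^ (M + 1 - s)) := by ring
    _ = ((b : ℂ) * ((qb : ℝ) : ℂ)) * I ^ (M + 1) := by rw [← pow_add, Nat.add_sub_cancel' hsM]
    _ = _ := by rw [pow_succ]; ring
  rw [e1, e2, ← div_div, mul_div_mul_right _ _ (pow_ne_zero M hIne)] at h
  have e3 : ((a : ℂ) * ((qa : ℝ) : ℂ)) / ((b : ℂ) * ((qb : ℝ) : ℂ))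
      = (((a * qa) / (b * qb) : ℝ) : ℂ) := by push_cast; ring
  rw [e3, Complex.div_I] at h
  have e4 : (-((((a * qa) / (b * qb) : ℝ) : ℂ) * I)).im = -((a * qa) / (b * qb)) := by
    rw [Complex.neg_im, Complex.mul_I_im, Complex.ofReal_re]
  rw [e4] at h
  have hqa0 : 0 < qa := Finset.prod_pos fun j _ => by linarith [haseq0 j]
  have hqb0 : 0 < qb := Finset.prod_pos fun j _ => by linarith [hbseq0 j]
  have hv : (a * qa) / (b * qb) ≤ 0 := by linarith
  have hvv : (a / b) * (qa / qb) ≤ 0 := by rwa [div_mul_div_comm]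
  have hq0 : 0 < qa / qb := div_pos hqa0 hqb0
  have hab : a / b ≠ 0 := div_ne_zero ha hb
  rcases hab.lt_or_gt with h' | h'
  · exact h'
  · nlinarith

lemma card_ge_of_sorted_lt {m : ℕ} {u : Fin m → ℝ} (hu : Monotone u) (k : Fin m) {t : ℝ}
    (h : u k < t) : (k : ℕ) + 1 ≤ (univ.filter fun j => u j < t).card := by
  have hsub : Finset.Iic k ⊆ univ.filter fun j => u j < t := by
    intro j hj
    rw [Finset.mem_Iic] at hj
    exact Finset.mem_filter.mpr ⟨Finset.mem_univ _, lt_of_le_of_lt (hu hj) h⟩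
  simpa [Fin.card_Iic] using Finset.card_le_card hsub

lemma card_le_of_sorted_le {m : ℕ} {u : Fin m → ℝ} (hu : Monotone u) (k : Fin m) {t : ℝ}
    (h : t ≤ u k) : (univ.filter fun j => u j < t).card ≤ (k : ℕ) := by
  have hsub : (univ.filter fun j => u j < t) ⊆ Finset.Iio k := by
    intro j hj
    rw [Finset.mem_filter] at hj
    rw [Finset.mem_Iio]
    by_contra hk
    have := hu (not_lt.mp hk)
    linarith [hj.2]
  simpa [Fin.card_Iio] using Finset.card_le_card hsub

lemma exists_generic {α β : ℝ} (hαβ : α < β) {m n : ℕ} (u : Fin m → ℝ) (v : Fin n → ℝ) :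
    ∃ t, α < t ∧ t < β ∧ (∀ j, u j ≠ t) ∧ (∀ j, v j ≠ t) := by
  have hfin : (Set.range u ∪ Set.range v).Finite :=
    (Set.finite_range u).union (Set.finite_range v)
  have hinf : (Set.Ioo α β \ (Set.range u ∪ Set.range v)).Infinite :=
    (Set.Ioo_infinite hαβ).diff hfin
  obtain ⟨t, ht⟩ := hinf.nonempty
  exact ⟨t, ht.1.1, ht.1.2, fun j hj => ht.2 (Or.inl ⟨j, hj⟩), fun j hj => ht.2 (Or.inr ⟨j, hj⟩)⟩

end PickAux


/-- **Proposition (interlacing of tangents).**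
Let `A_M = a z₁^r ∏_{j=1}^{M-r} (z₂ + a_j z₁)` and
`B_{M+1} = b z₁^s ∏_{j=1}^{M+1-s} (z₂ + b_j z₁)` with `a, b` nonzero reals,
`0 ≤ a₁ ≤ ⋯ ≤ a_{M-r}`, `0 ≤ b₁ ≤ ⋯ ≤ b_{M+1-s}`, and set `a_j = ∞` resp. `b_j = ∞`
for the remaining indices.  If `A_M/B_{M+1}` is a Pick function on `ℍ²`, then `s = r`
or `s = r + 1`, and the slopes interlace: `b₁ ≤ a₁ ≤ b₂ ≤ ⋯ ≤ a_M ≤ b_{M+1}`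
(inequalities in `[0,∞]`). -/
theorem homogeneous_pick_interlacing (M r s : ℕ) (hrM : r ≤ M) (hsM : s ≤ M + 1)
    (a b : ℝ) (ha : a ≠ 0) (hb : b ≠ 0)
    (aseq : Fin (M - r) → ℝ) (bseq : Fin (M + 1 - s) → ℝ)
    (haseq0 : ∀ j, 0 ≤ aseq j) (hbseq0 : ∀ j, 0 ≤ bseq j)
    (haseqmono : Monotone aseq) (hbseqmono : Monotone bseq)
    (hPick : ∀ z₁ z₂ : ℂ, 0 < z₁.im → 0 < z₂.im →
      0 ≤ (((a : ℂ) * z₁ ^ r * ∏ j, (z₂ + (aseq j : ℂ) * z₁)) /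
            ((b : ℂ) * z₁ ^ s * ∏ j, (z₂ + (bseq j : ℂ) * z₁))).im) :
    (s = r ∨ s = r + 1) ∧
    ∀ j : Fin M,
      (if h : (j : ℕ) < M + 1 - s then ENNReal.ofReal (bseq ⟨j, h⟩) else ⊤) ≤
        (if h : (j : ℕ) < M - r then ENNReal.ofReal (aseq ⟨j, h⟩) else ⊤) ∧
      (if h : (j : ℕ) < M - r then ENNReal.ofReal (aseq ⟨j, h⟩) else ⊤) ≤
        (if h : (j : ℕ) + 1 < M + 1 - s then ENNReal.ofReal (bseq ⟨(j : ℕ) + 1, h⟩) else ⊤) := by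
  classical
  have hcneg : a / b < 0 := PickAux.c_neg' M r s a b hrM hsM ha hb aseq bseq haseq0 hbseq0 hPick
  have hg : ∀ w : ℂ, 0 < w.im →
      0 ≤ ((((a / b : ℝ) : ℂ) * ∏ j, (w + (aseq j : ℂ))) / ∏ j, (w + (bseq j : ℂ))).im := by
    intro w hw
    have h1 := PickAux.slice' M r s a b hrM hsM aseq bseq hPick w hw
    have heq : ((((a / b : ℝ) : ℂ) * ∏ j, (w + (aseq j : ℂ))) / ∏ j, (w + (bseq j : ℂ)))
        = ((a : ℂ) * ∏ j, (w + (aseq j : ℂ))) / ((b : ℂ) * ∏ j, (w + (bseq j : ℂ))) := by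
      push_cast
      rw [div_mul_eq_mul_div, div_div]
    rwa [heq]
  have hcount : ∀ t : ℝ, (∀ j, aseq j ≠ t) → (∀ j, bseq j ≠ t) →
      (Finset.univ.filter fun j => aseq j < t).card ≤
        (Finset.univ.filter fun j => bseq j < t).card ∧
      (Finset.univ.filter fun j => bseq j < t).card ≤
        (Finset.univ.filter fun j => aseq j < t).card + 1 :=
    fun t h1 h2 => PickAux.count_window hcneg aseq bseq hg t h1 h2
  have hglob : M - r ≤ M + 1 - s ∧ M + 1 - s ≤ (M - r) + 1 := by
    set t₀ : ℝ := (∑ j, aseq j) + (∑ j, bseq j) + 1 with ht₀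
    have hat : ∀ j, aseq j < t₀ := by
      intro j
      have h1 : aseq j ≤ ∑ j, aseq j :=
        Finset.single_le_sum (fun j _ => haseq0 j) (Finset.mem_univ j)
      have h2 : (0:ℝ) ≤ ∑ j, bseq j := Finset.sum_nonneg fun j _ => hbseq0 j
      rw [ht₀]; linarith
    have hbt : ∀ j, bseq j < t₀ := by
      intro j
      have h1 : bseq j ≤ ∑ j, bseq j :=
        Finset.single_le_sum (fun j _ => hbseq0 j) (Finset.mem_univ j)
      have h2 : (0:ℝ) ≤ ∑ j, aseq j := Finset.sum_nonneg fun j _ => haseq0 j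
      rw [ht₀]; linarith
    obtain ⟨hA, hB⟩ := hcount t₀ (fun j => (hat j).ne) (fun j => (hbt j).ne)
    rw [Finset.filter_true_of_mem (fun j _ => hat j),
      Finset.filter_true_of_mem (fun j _ => hbt j), Finset.card_univ, Finset.card_univ,
      Fintype.card_fin, Fintype.card_fin] at hA hB
    exact ⟨hA, hB⟩
  obtain ⟨hg1, hg2⟩ := hglob
  refine ⟨by omega, ?_⟩
  intro j
  constructor
  · by_cases hja : (j : ℕ) < M - r
    · have hjb : (j : ℕ) < M + 1 - s := lt_of_lt_of_le hja hg1
      rw [dif_pos hja, dif_pos hjb]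
      apply ENNReal.ofReal_le_ofReal
      by_contra hlt
      push_neg at hlt
      obtain ⟨t, ht1, ht2, htu, htv⟩ := PickAux.exists_generic hlt aseq bseq
      obtain ⟨hA, _⟩ := hcount t htu htv
      have c1 := PickAux.card_ge_of_sorted_lt haseqmono ⟨j, hja⟩ ht1
      have c2 := PickAux.card_le_of_sorted_le hbseqmono ⟨j, hjb⟩ ht2.le
      simp only at c1 c2
      omega
    · rw [dif_neg hja]; exact le_top
  · by_cases hjb : (j : ℕ) + 1 < M + 1 - s
    · have hja : (j : ℕ) < M - r := by omega
      rw [dif_pos hja, dif_pos hjb]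
      apply ENNReal.ofReal_le_ofReal
      by_contra hlt
      push_neg at hlt
      obtain ⟨t, ht1, ht2, htu, htv⟩ := PickAux.exists_generic hlt bseq aseq
      obtain ⟨_, hB⟩ := hcount t htv htu
      have c1 := PickAux.card_ge_of_sorted_lt hbseqmono ⟨(j : ℕ) + 1, hjb⟩ ht1
      have c2 := PickAux.card_le_of_sorted_le haseqmono ⟨j, hja⟩ ht2.le
      simp only at c1 c2
      omega
    · rw [dif_neg hjb]; exact le_top
end

section
/- Let m and L be positive integers, let q ∈ ℝ[z] with q(0) = 0, q′(0) > 0 and deg q < 2L, and let ψ be analytic on a neighborhood of 0 in ℂ with Im ψ(0) > 0. Define h(z) = q(z) + z^{2L}ψ(z^{1/m}), where z^{1/m} is the branch of the m-th root with branch cut in the lower half plane, so that h is analytic on a domain containing {z : 0 < |z| < ε and Im z ≥ 0} for some ε > 0. Then there exist r, c > 0 such that Im h(z) ≥ c|z|^{2L} for all z with 0 < |z| < r and Im z ≥ 0; in particular h(z) ≠ 0 for all such z. -/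
private lemma im_pow_mul_abs_le (z : ℂ) (n : ℕ) :
    |(z ^ n).im| * ‖z‖ ≤ n * |z.im| * ‖z‖ ^ n := by
  induction n with
  | zero => simp
  | succ n ih =>
    have h1 : (z ^ (n + 1)).im = (z ^ n).im * z.re + (z ^ n).re * z.im := by
      rw [pow_succ, Complex.mul_im]; ring
    have hre : |(z ^ n).re| ≤ ‖z‖ ^ n := by
      simpa [map_pow] using Complex.abs_re_le_norm (z ^ n)
    have hrez : |z.re| ≤ ‖z‖ := Complex.abs_re_le_norm z
    have h2 : |(z ^ (n + 1)).im| ≤ |(z ^ n).im| * ‖z‖ + ‖z‖ ^ n * |z.im| := by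
      rw [h1]
      calc |(z ^ n).im * z.re + (z ^ n).re * z.im|
          ≤ |(z ^ n).im| * |z.re| + |(z ^ n).re| * |z.im| := by
            rw [← abs_mul, ← abs_mul]; exact abs_add_le _ _
        _ ≤ |(z ^ n).im| * ‖z‖ + ‖z‖ ^ n * |z.im| := by gcongr
    have h3 := mul_le_mul_of_nonneg_right h2 (norm_nonneg z)
    have h4 := mul_le_mul_of_nonneg_right ih (norm_nonneg z)
    push_cast
    calc |(z ^ (n + 1)).im| * ‖z‖
        ≤ (|(z ^ n).im| * ‖z‖ + ‖z‖ ^ n * |z.im|) * ‖z‖ := h3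
      _ = |(z ^ n).im| * ‖z‖ * ‖z‖
          + |z.im| * (‖z‖ ^ n * ‖z‖) := by ring
      _ ≤ ↑n * |z.im| * ‖z‖ ^ n * ‖z‖
          + |z.im| * (‖z‖ ^ n * ‖z‖) := by linarith [h4]
      _ = (↑n + 1) * |z.im| * ‖z‖ ^ (n + 1) := by rw [pow_succ]; ring

set_option maxHeartbeats 1000000

/-- **Theorem (lower bound for Puiseux branches of pure stable type).**
Let `m, L ≥ 1`, `q ∈ ℝ[z]` with `q(0) = 0`, `q'(0) > 0`, `deg q < 2L`, and let `ψ`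
be analytic at `0` with `Im ψ(0) > 0`.  Define
`h(z) = q(z) + z^{2L} ψ(z^{1/m})`, where `z^{1/m} = exp(log z / m)` is the branch of
the `m`-th root with branch cut avoiding the closed upper half plane.  Then there are
`r, c > 0` such that `Im h(z) ≥ c |z|^{2L}` for all `z` with `0 < |z| < r` and
`Im z ≥ 0`; in particular `h(z) ≠ 0` for all such `z`. -/
theorem puiseux_branch_lower_bound (m L : ℕ) (hm : 0 < m) (hL : 0 < L)
    (q : Polynomial ℝ) (hq0 : Polynomial.eval 0 q = 0)
    (hq' : 0 < Polynomial.eval 0 (Polynomial.derivative q))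
    (hqdeg : q.natDegree < 2 * L)
    (ψ : ℂ → ℂ) (hψ : AnalyticAt ℂ ψ 0) (hψ0 : 0 < (ψ 0).im) :
    ∃ r > (0 : ℝ), ∃ c > (0 : ℝ), ∀ z : ℂ, z ≠ 0 → ‖z‖ < r → 0 ≤ z.im →
      c * ‖z‖ ^ (2 * L) ≤
        (Polynomial.eval z (q.map (algebraMap ℝ ℂ)) +
          z ^ (2 * L) * ψ (Complex.exp (Complex.log z / (m : ℂ)))).im ∧
      Polynomial.eval z (q.map (algebraMap ℝ ℂ)) +
          z ^ (2 * L) * ψ (Complex.exp (Complex.log z / (m : ℂ))) ≠ 0 := by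
  set a : ℝ := q.coeff 1 with ha_def
  have ha : 0 < a := by
    have h0 : Polynomial.eval 0 (Polynomial.derivative q) = a := by
      rw [← Polynomial.coeff_zero_eq_eval_zero, Polynomial.coeff_derivative]
      norm_num
      exact ha_def.symm
    rwa [h0] at hq'
  set b : ℝ := (ψ 0).im with hb_def
  set u : ℝ := (ψ 0).re with hu_def
  have hb : 0 < b := hψ0
  obtain ⟨δ, hδ, hδψ⟩ := Metric.continuousAt_iff.mp hψ.continuousAt (b / 4) (by positivity)
  set N := q.natDegree with hN_def
  have hN1 : 1 ≤ N := Polynomial.le_natDegree_of_ne_zero (by exact_mod_cast ha.ne')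
  set C3 : ℝ := ∑ k ∈ Finset.range (N + 1), (k : ℝ) * |q.coeff k| with hC3_def
  have hC3 : 0 ≤ C3 := Finset.sum_nonneg fun k _ => by positivity
  set C4 : ℝ := C3 + 2 * b * L ^ 2 + 2 * L * |u| with hC4_def
  have hC4 : 0 ≤ C4 := by positivity
  refine ⟨min 1 (min (δ ^ m) (a / (C4 + 1))), lt_min one_pos
    (lt_min (pow_pos hδ m) (div_pos ha (by linarith))), b / 2, by positivity, ?_⟩
  intro z hz hzr hy0
  set ρ : ℝ := ‖z‖ with hρ_def
  have hρ : 0 < ρ := norm_pos_iff.mpr hz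
  have hρ1 : ρ ≤ 1 := le_of_lt (lt_of_lt_of_le hzr (min_le_left _ _))
  have hρδ : ρ < δ ^ m := lt_of_lt_of_le hzr ((min_le_right _ _).trans (min_le_left _ _))
  have hρa : ρ * (C4 + 1) < a := by
    have := lt_of_lt_of_le hzr ((min_le_right _ _).trans (min_le_right _ _))
    have h1 : 0 < C4 + 1 := by linarith
    calc ρ * (C4 + 1) < (a / (C4 + 1)) * (C4 + 1) := by
          exact mul_lt_mul_of_pos_right this h1
      _ = a := by field_simp
  set y : ℝ := z.im with hy_def
  have hyρ : y ≤ ρ := le_trans (le_abs_self _) (Complex.abs_im_le_norm z)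
  -- the root is small
  set w : ℂ := Complex.exp (Complex.log z / (m : ℂ)) with hw_def
  have habsw : ‖w‖ < δ := by
    have h1 : ‖w‖ = Real.exp (Real.log ρ / m) := by
      rw [hw_def, Complex.norm_exp]
      congr 1
      rw [show ((m : ℂ)) = ((m : ℝ) : ℂ) by push_cast; rfl, Complex.div_ofReal_re,
        Complex.log_re]
    rw [h1, show δ = Real.exp (Real.log δ) from (Real.exp_log hδ).symm]
    apply Real.exp_lt_exp.mpr
    rw [div_lt_iff₀ (by exact_mod_cast hm)]
    calc Real.log ρ < Real.log (δ ^ m) := Real.log_lt_log hρ hρδ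
      _ = Real.log δ * m := by rw [Real.log_pow]; ring
  have hψw : ‖ψ w - ψ 0‖ ≤ b / 4 := by
    have := hδψ (x := w) (by simpa [Complex.dist_eq] using habsw)
    rw [Complex.dist_eq] at this
    exact this.le
  -- power bounds
  have hBk : ∀ k : ℕ, 2 ≤ k → |(z ^ k).im| ≤ k * y * ρ := by
    intro k hk
    have h1 := im_pow_mul_abs_le z k
    have h2 : ρ ^ k ≤ ρ ^ 2 := pow_le_pow_of_le_one hρ.le hρ1 hk
    have h3 : |z.im| = y := abs_of_nonneg hy0
    rw [h3, ← hρ_def] at h1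
    have h4 : |(z ^ k).im| * ρ ≤ (k * y * ρ) * ρ := by
      calc |(z ^ k).im| * ρ ≤ k * y * ρ ^ k := h1
        _ ≤ k * y * ρ ^ 2 := by
            have : (0:ℝ) ≤ (k : ℝ) * y := by positivity
            nlinarith
        _ = (k * y * ρ) * ρ := by ring
    exact le_of_mul_le_mul_right h4 hρ
  have hIm2L : |(z ^ (2 * L)).im| ≤ 2 * L * y * ρ := by
    have := hBk (2 * L) (by omega)
    calc |(z ^ (2 * L)).im| ≤ (2 * L : ℕ) * y * ρ := this
      _ = 2 * L * y * ρ := by push_cast; ring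
  have hImL2 : (z ^ L).im ^ 2 ≤ L ^ 2 * y * ρ := by
    have h1 := im_pow_mul_abs_le z L
    rw [abs_of_nonneg hy0, ← hρ_def] at h1
    have h2 : (|(z ^ L).im| * ρ) ^ 2 ≤ (L * y * ρ ^ L) ^ 2 := by
      apply pow_le_pow_left₀ (by positivity) h1
    have h3 : (z ^ L).im ^ 2 * ρ ^ 2 ≤ L ^ 2 * y ^ 2 * ρ ^ (2 * L) := by
      calc (z ^ L).im ^ 2 * ρ ^ 2 = (|(z ^ L).im| * ρ) ^ 2 := by rw [mul_pow, sq_abs]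
        _ ≤ (L * y * ρ ^ L) ^ 2 := h2
        _ = L ^ 2 * y ^ 2 * ρ ^ (2 * L) := by rw [mul_pow, mul_pow, ← pow_mul]; ring_nf
    have h4 : ρ ^ (2 * L) ≤ ρ ^ 2 := pow_le_pow_of_le_one hρ.le hρ1 (by omega)
    have h5 : (z ^ L).im ^ 2 * ρ ^ 2 ≤ (L ^ 2 * y * ρ) * ρ ^ 2 := by
      calc (z ^ L).im ^ 2 * ρ ^ 2 ≤ L ^ 2 * y ^ 2 * ρ ^ (2 * L) := h3
        _ ≤ L ^ 2 * y ^ 2 * ρ ^ 2 := by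
            have := mul_le_mul_of_nonneg_left h4 (show (0:ℝ) ≤ (L:ℝ) ^ 2 * y ^ 2 by positivity)
            linarith
        _ ≤ (L ^ 2 * y * ρ) * ρ ^ 2 := by
            have hyy : y * y ≤ y * ρ := mul_le_mul_of_nonneg_left hyρ hy0
            have := mul_le_mul_of_nonneg_left hyy
              (show (0:ℝ) ≤ (L:ℝ) ^ 2 * ρ ^ 2 by positivity)
            nlinarith [this]
    exact le_of_mul_le_mul_right h5 (by positivity)
  have hRe2L : (z ^ (2 * L)).re = ρ ^ (2 * L) - 2 * (z ^ L).im ^ 2 := by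
    have h1 : z ^ (2 * L) = (z ^ L) ^ 2 := by rw [← pow_mul, mul_comm]
    have h2 : ρ ^ (2 * L) = (z ^ L).re ^ 2 + (z ^ L).im ^ 2 := by
      calc ρ ^ (2 * L) = ‖z ^ L‖ ^ 2 := by
            rw [hρ_def, ← norm_pow, h1, norm_pow]
        _ = (z ^ L).re ^ 2 + (z ^ L).im ^ 2 := by
            rw [Complex.sq_norm, Complex.normSq_apply]; ring
    rw [h1, sq, Complex.mul_re, h2]
    ring
  -- estimate on the ψ(0) part
  have hmain : b * ρ ^ (2 * L) - 2 * b * (L ^ 2 * y * ρ) - |u| * (2 * L * y * ρ)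
      ≤ (z ^ (2 * L) * ψ 0).im := by
    have h1 : (z ^ (2 * L) * ψ 0).im = (z ^ (2 * L)).re * b + (z ^ (2 * L)).im * u := by
      rw [Complex.mul_im]
    rw [h1, hRe2L]
    have h2 : (z ^ (2 * L)).im * u ≥ -(2 * L * y * ρ) * |u| := by
      have := abs_mul ((z ^ (2 * L)).im) u
      have h3 : |(z ^ (2 * L)).im * u| ≤ (2 * L * y * ρ) * |u| := by
        rw [this]; exact mul_le_mul_of_nonneg_right hIm2L (abs_nonneg u)
      linarith [neg_abs_le ((z ^ (2 * L)).im * u)]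
    nlinarith [hImL2]
  -- error term
  have herr : -(b / 4 * ρ ^ (2 * L)) ≤ (z ^ (2 * L) * (ψ w - ψ 0)).im := by
    have h1 : |(z ^ (2 * L) * (ψ w - ψ 0)).im| ≤ b / 4 * ρ ^ (2 * L) := by
      calc |(z ^ (2 * L) * (ψ w - ψ 0)).im| ≤ ‖z ^ (2 * L) * (ψ w - ψ 0)‖ :=
            Complex.abs_im_le_norm _
        _ = ρ ^ (2 * L) * ‖ψ w - ψ 0‖ := by rw [norm_mul, norm_pow]
        _ ≤ ρ ^ (2 * L) * (b / 4) := by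
            exact mul_le_mul_of_nonneg_left hψw (by positivity)
        _ = b / 4 * ρ ^ (2 * L) := by ring
    linarith [neg_abs_le ((z ^ (2 * L) * (ψ w - ψ 0)).im)]
  -- polynomial estimate
  have hqest : a * y - C3 * (y * ρ) ≤ (Polynomial.eval z (q.map (algebraMap ℝ ℂ))).im := by
    have heval : Polynomial.eval z (q.map (algebraMap ℝ ℂ))
        = ∑ k ∈ Finset.range (N + 1), (q.coeff k : ℂ) * z ^ k := by
      rw [Polynomial.eval_eq_sum_range'
        (Polynomial.natDegree_map_le.trans_lt (Nat.lt_succ_self N)) z]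
      refine Finset.sum_congr rfl fun k _ => ?_
      rw [Polynomial.coeff_map]
      norm_num
    have him : (Polynomial.eval z (q.map (algebraMap ℝ ℂ))).im
        = ∑ k ∈ Finset.range (N + 1), q.coeff k * (z ^ k).im := by
      rw [heval, Complex.im_sum]
      refine Finset.sum_congr rfl fun k _ => ?_
      simp [Complex.mul_im]
    have hmem : 1 ∈ Finset.range (N + 1) := Finset.mem_range.mpr (by omega)
    have hterm : ∀ k ∈ (Finset.range (N + 1)).erase 1,
        |q.coeff k * (z ^ k).im| ≤ (k : ℝ) * |q.coeff k| * (y * ρ) := by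
      intro k hk
      obtain ⟨hk1, -⟩ := Finset.mem_erase.mp hk
      match k, hk1 with
      | 0, _ => simp
      | 1, hk1 => exact absurd rfl hk1
      | (k + 2), _ =>
        have hB := hBk (k + 2) (by omega)
        rw [abs_mul]
        calc |q.coeff (k + 2)| * |(z ^ (k + 2)).im|
            ≤ |q.coeff (k + 2)| * ((k + 2 : ℕ) * y * ρ) :=
              mul_le_mul_of_nonneg_left hB (abs_nonneg _)
          _ = ((k + 2 : ℕ) : ℝ) * |q.coeff (k + 2)| * (y * ρ) := by push_cast; ring
    have hsum : |∑ k ∈ (Finset.range (N + 1)).erase 1, q.coeff k * (z ^ k).im|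
        ≤ C3 * (y * ρ) := by
      calc |∑ k ∈ (Finset.range (N + 1)).erase 1, q.coeff k * (z ^ k).im|
          ≤ ∑ k ∈ (Finset.range (N + 1)).erase 1, |q.coeff k * (z ^ k).im| :=
            Finset.abs_sum_le_sum_abs _ _
        _ ≤ ∑ k ∈ (Finset.range (N + 1)).erase 1, (k : ℝ) * |q.coeff k| * (y * ρ) :=
            Finset.sum_le_sum hterm
        _ = (∑ k ∈ (Finset.range (N + 1)).erase 1, (k : ℝ) * |q.coeff k|) * (y * ρ) := by
            rw [← Finset.sum_mul]
        _ ≤ C3 * (y * ρ) := by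
            apply mul_le_mul_of_nonneg_right _ (by positivity)
            exact Finset.sum_le_sum_of_subset_of_nonneg (Finset.erase_subset _ _)
              (fun k _ _ => by positivity)
    rw [him, ← Finset.sum_erase_add _ _ hmem, pow_one, ← ha_def, ← hy_def]
    have := neg_abs_le (∑ k ∈ (Finset.range (N + 1)).erase 1, q.coeff k * (z ^ k).im)
    linarith
  -- combine
  have hsplit : Polynomial.eval z (q.map (algebraMap ℝ ℂ)) + z ^ (2 * L) * ψ w
      = Polynomial.eval z (q.map (algebraMap ℝ ℂ)) + z ^ (2 * L) * ψ 0
        + z ^ (2 * L) * (ψ w - ψ 0) := by ring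
  have hfinal : b / 2 * ρ ^ (2 * L)
      ≤ (Polynomial.eval z (q.map (algebraMap ℝ ℂ)) + z ^ (2 * L) * ψ w).im := by
    rw [hsplit]
    simp only [Complex.add_im]
    have hC4a : C4 * ρ ≤ a := by nlinarith [hρa, hρ.le]
    have hkey : 0 ≤ a * y - (C3 * (y * ρ) + 2 * b * (L ^ 2 * y * ρ) + |u| * (2 * L * y * ρ)) := by
      have h0 : C3 * (y * ρ) + 2 * b * (L ^ 2 * y * ρ) + |u| * (2 * L * y * ρ)
          = y * (C4 * ρ) := by rw [hC4_def]; ring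
      have h1 : 0 ≤ y * (a - C4 * ρ) := mul_nonneg hy0 (by linarith)
      rw [h0]; nlinarith [h1]
    have hρ2L : 0 < ρ ^ (2 * L) := by positivity
    have hbρ : 0 ≤ b * ρ ^ (2 * L) := by positivity
    linarith [hqest, hmain, herr, hkey, hbρ]
  constructor
  · exact hfinal
  · intro hcontra
    rw [hcontra] at hfinal
    simp only [Complex.zero_im] at hfinal
    nlinarith [pow_pos hρ (2 * L)]
end

section
/- Let p, q ∈ ℂ[z₁,…,z_d] with p having no zeros in ℍ^d, and suppose f = q/p is nonconstant on ℍ^d. Then for c > 0, the inequality |f(z)| < c holds for all z ∈ ℍ^d if and only if the (d+1)-variable polynomial c(w+i)p(z₁,…,z_d) − (w−i)q(z₁,…,z_d) ∈ ℂ[z₁,…,z_d,w] has no zeros in ℍ^{d+1}. -/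
open Complex

lemma mv_diff (d : ℕ) (p : MvPolynomial (Fin d) ℂ) :
    Differentiable ℂ (fun z : Fin d → ℂ => MvPolynomial.eval z p) := by
  induction p using MvPolynomial.induction_on with
  | C a => simp
  | add p q hp hq => simp only [map_add]; exact hp.add hq
  | mul_X p i hp =>
      simp only [map_mul, MvPolynomial.eval_X]
      exact hp.mul (differentiable_pi.mp differentiable_id i)

/-- **Lemma (boundedness via a (d+1)-variable stable polynomial).**
Let `p, q ∈ ℂ[z₁,…,z_d]` with `p` zero-free on `ℍ^d` and `f = q/p` nonconstant on
`ℍ^d`.  Then for each `c > 0`, `|f| < c` on `ℍ^d` if and only if the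
(d+1)-variable polynomial `c(w+i)p(z) - (w-i)q(z)` has no zeros in `ℍ^{d+1}`
(stated here functionally). -/
theorem bounded_iff_extended_stable (d : ℕ) (p q : MvPolynomial (Fin d) ℂ)
    (hstable : ∀ z : Fin d → ℂ, (∀ i, 0 < (z i).im) → MvPolynomial.eval z p ≠ 0)
    (hnc : ∃ z w : Fin d → ℂ, (∀ i, 0 < (z i).im) ∧ (∀ i, 0 < (w i).im) ∧
      MvPolynomial.eval z q / MvPolynomial.eval z p ≠
        MvPolynomial.eval w q / MvPolynomial.eval w p) :
    ∀ c : ℝ, 0 < c →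
      ((∀ z : Fin d → ℂ, (∀ i, 0 < (z i).im) →
          ‖MvPolynomial.eval z q / MvPolynomial.eval z p‖ < c) ↔
        (∀ (z : Fin d → ℂ) (w : ℂ), (∀ i, 0 < (z i).im) → 0 < w.im →
          (c : ℂ) * (w + Complex.I) * MvPolynomial.eval z p
            - (w - Complex.I) * MvPolynomial.eval z q ≠ 0)) := by
  intro c hc
  set U : Set (Fin d → ℂ) := {z | ∀ i, 0 < (z i).im} with hU
  set f : (Fin d → ℂ) → ℂ := fun z => MvPolynomial.eval z q / MvPolynomial.eval z p with hf
  constructor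
  · -- forward: |f| < c → stable
    intro hb z w hz hw h0
    have hp := hstable z hz
    have ha := hb z hz
    -- equation: c(w+i) = (w-i) * (q/p)
    have hq' : MvPolynomial.eval z q = f z * MvPolynomial.eval z p := by
      simp only [hf]; field_simp
    have h2 : ((c : ℂ) * (w + Complex.I) - (w - Complex.I) * f z) * MvPolynomial.eval z p = 0 := by
      linear_combination h0 + (w - Complex.I) * hq'
    have key : (c : ℂ) * (w + Complex.I) = (w - Complex.I) * f z :=
      sub_eq_zero.mp ((mul_eq_zero.mp h2).resolve_right hp)
    -- |w - i| < |w + i| since Im w > 0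
    have habs : ‖w - Complex.I‖ < ‖w + Complex.I‖ := by
      have h1 : Complex.normSq (w - Complex.I) < Complex.normSq (w + Complex.I) := by
        simp only [Complex.normSq_apply, Complex.add_im, Complex.add_re, Complex.sub_im,
          Complex.sub_re, Complex.I_re, Complex.I_im]
        nlinarith
      have := Real.sqrt_lt_sqrt (Complex.normSq_nonneg _) h1
      simpa [Complex.norm_def] using this
    have hwi : w + Complex.I ≠ 0 := by
      intro h
      have := congrArg Complex.im h
      simp at this
      linarith
    have := congrArg norm key
    rw [norm_mul, norm_mul, Complex.norm_real, Real.norm_eq_abs, abs_of_pos hc] at this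
    have hlt : ‖w - Complex.I‖ * ‖f z‖ < c * ‖w + Complex.I‖ := by
      calc ‖w - Complex.I‖ * ‖f z‖
          ≤ ‖w + Complex.I‖ * ‖f z‖ := by
            exact mul_le_mul_of_nonneg_right habs.le (norm_nonneg _)
        _ < ‖w + Complex.I‖ * c := by
            apply mul_lt_mul_of_pos_left ha
            exact (norm_pos_iff.mpr hwi)
        _ = c * ‖w + Complex.I‖ := mul_comm _ _
    rw [this] at hlt
    exact lt_irrefl _ hlt
  · -- reverse: stable → |f| < c
    intro hs
    -- Step 1: |f| ≤ c on U
    have hle : ∀ z : Fin d → ℂ, (∀ i, 0 < (z i).im) → ‖f z‖ ≤ c := by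
      intro z hz
      by_contra hgt
      push_neg at hgt
      set a := f z with haz
      have hac : a - c ≠ 0 := by
        intro h
        rw [sub_eq_zero] at h
        rw [h] at hgt
        simp [Complex.norm_real, abs_of_pos hc] at hgt
      set w : ℂ := Complex.I * (c + a) / (a - c) with hw
      have hns : 0 < Complex.normSq (a - c) := Complex.normSq_pos.mpr hac
      have hsq : (‖a‖)^2 = a.re^2 + a.im^2 := by
        rw [Complex.sq_norm, Complex.normSq_apply]; ring
      have hlt2 : c^2 < a.re^2 + a.im^2 := by
        rw [← hsq]
        nlinarith [norm_nonneg a]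
      have him : 0 < w.im := by
        rw [hw, Complex.div_im]
        have hre : (Complex.I * (c + a)).re = -a.im := by simp
        have him2 : (Complex.I * (c + a)).im = c + a.re := by simp
        have h3 : ((a : ℂ) - c).re = a.re - c := by simp
        have h4 : ((a : ℂ) - c).im = a.im := by simp
        rw [hre, him2, h3, h4, div_sub_div_same]
        apply div_pos _ hns
        nlinarith
      have hp := hstable z hz
      have hq : MvPolynomial.eval z q = a * MvPolynomial.eval z p := by
        rw [haz, hf]
        field_simp
      apply hs z w hz him
      rw [hq]
      have hwkey : (c : ℂ) * (w + Complex.I) - (w - Complex.I) * a = 0 := by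
        rw [hw]
        field_simp
        ring
      linear_combination MvPolynomial.eval z p * hwkey
    -- Step 2: strictness via maximum modulus
    intro z hz
    rcases lt_or_eq_of_le (hle z hz) with h | h
    · exact h
    · exfalso
      -- max modulus: f constant, contradicting hnc
      have hUo : IsOpen U := by
        have : U = ⋂ i, (fun z : Fin d → ℂ => (z i).im) ⁻¹' Set.Ioi 0 := by
          ext x; simp [hU]
        rw [this]
        exact isOpen_iInter_of_finite fun i =>
          (Complex.continuous_im.comp (continuous_apply i)).isOpen_preimage _ isOpen_Ioi
      have hUc : Convex ℝ U := by
        intro x hx y hy s t hs ht hst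
        intro i
        have : ((s • x + t • y) i).im = s * (x i).im + t * (y i).im := by
          simp [Complex.add_im, Complex.smul_im]
        rw [this]
        rcases eq_or_lt_of_le hs with h' | h'
        · rw [← h'] at hst ⊢; simp at hst ⊢; nlinarith [hy i]
        · nlinarith [hx i, hy i, ht]
      have hdiff : DifferentiableOn ℂ f U := by
        rw [hf]
        intro x hx
        have hdq : DifferentiableAt ℂ (fun z : Fin d → ℂ => MvPolynomial.eval z q) x :=
          (mv_diff d q).differentiableAt
        have hdp : DifferentiableAt ℂ (fun z : Fin d → ℂ => MvPolynomial.eval z p) x :=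
          (mv_diff d p).differentiableAt
        simp only [div_eq_mul_inv]
        exact (hdq.mul (hdp.inv (hstable x hx))).differentiableWithinAt
      have hmax : IsMaxOn (norm ∘ f) U z := by
        intro x hx
        simp only [Function.comp_apply, Set.mem_setOf_eq]
        show ‖f x‖ ≤ ‖f z‖
        rw [h]
        exact hle x hx
      have heq := Complex.eqOn_of_isPreconnected_of_isMaxOn_norm hUc.isPreconnected hUo hdiff hz hmax
      obtain ⟨z1, w1, hz1, hw1, hne⟩ := hnc
      have e1 := heq hz1
      have e2 := heq hw1
      simp only [Function.const_apply] at e1 e2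
      exact hne (e1.trans e2.symm)
end

section
/- Let p, q ∈ ℂ[z₁,…,z_d] with p having no zeros in ℍ^d, p(0) = 0 with order of vanishing M at 0 and lowest homogeneous term P_M, and let Q_M denote the degree-M homogeneous part of q (possibly identically zero). If f = q/p is bounded on ℍ^d, then Q_M is a constant multiple of P_M. -/
open MvPolynomial Polynomial Filter Finset

/-- Zariski density of products of infinite sets. -/
lemma aux_eval_zero_of_forall_mem : ∀ (n : ℕ) (S : Fin n → Set ℂ), (∀ i, (S i).Infinite) →
    ∀ (r : MvPolynomial (Fin n) ℂ),
    (∀ z : Fin n → ℂ, (∀ i, z i ∈ S i) → MvPolynomial.eval z r = 0) → r = 0 := by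
  intro n
  induction n with
  | zero =>
    intro S hS r h
    obtain ⟨c, rfl⟩ := MvPolynomial.C_surjective (Fin 0) r
    have := h (fun i => i.elim0) (fun i => i.elim0)
    simp only [MvPolynomial.eval_C] at this
    rw [this, map_zero]
  | succ m IH =>
    intro S hS r h
    have hr' : MvPolynomial.finSuccEquiv ℂ m r = 0 := by
      apply Polynomial.ext
      intro k
      rw [Polynomial.coeff_zero]
      apply IH (fun i => S i.succ) (fun i => hS i.succ)
      intro y hy
      have hmap : Polynomial.map (MvPolynomial.eval y) (MvPolynomial.finSuccEquiv ℂ m r) = 0 := by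
        apply Polynomial.eq_zero_of_infinite_isRoot
        apply Set.Infinite.mono _ (hS 0)
        intro x hx
        simp only [Set.mem_setOf_eq, Polynomial.IsRoot]
        rw [← MvPolynomial.eval_eq_eval_mv_eval']
        apply h
        intro i
        refine Fin.cases ?_ ?_ i
        · simpa using hx
        · intro j; simpa using hy j
      have := congrArg (fun P => Polynomial.coeff P k) hmap
      simpa using this
    have : r = (MvPolynomial.finSuccEquiv ℂ m).symm 0 := by
      rw [← hr']; exact ((MvPolynomial.finSuccEquiv ℂ m).symm_apply_apply r).symm
    simpa using this

lemma aux_eval_smul {d : ℕ} {r : MvPolynomial (Fin d) ℂ} {n : ℕ}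
    (h : r.IsHomogeneous n) (c : ℂ) (z : Fin d → ℂ) :
    MvPolynomial.eval (c • z) r = c ^ n * MvPolynomial.eval z r := by
  rw [MvPolynomial.eval_eq', MvPolynomial.eval_eq', Finset.mul_sum]
  apply Finset.sum_congr rfl
  intro m hm
  have hc : MvPolynomial.coeff m r ≠ 0 := (MvPolynomial.mem_support_iff).1 hm
  have hdeg : Finsupp.weight (1 : Fin d → ℕ) m = n := h hc
  have hsum : ∑ i, m i = n := by
    rw [← hdeg, Finsupp.weight_apply, Finsupp.sum]
    simp only [Pi.one_apply, smul_eq_mul, mul_one]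
    exact (Finset.sum_subset (Finset.subset_univ _)
      (fun x _ hx => Finsupp.notMem_support_iff.1 hx)).symm
  have : ∏ i, (c • z) i ^ m i = c ^ n * ∏ i, z i ^ m i := by
    have : ∀ i, (c • z) i ^ m i = c ^ m i * z i ^ m i := by
      intro i; rw [Pi.smul_apply, smul_eq_mul, mul_pow]
    rw [Finset.prod_congr rfl (fun i _ => this i), Finset.prod_mul_distrib,
      Finset.prod_pow_eq_pow_sum, hsum]
  rw [this]; ring

lemma aux_eval_expand {d : ℕ} (r : MvPolynomial (Fin d) ℂ) (N : ℕ) (hN : r.totalDegree < N)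
    (t : ℂ) (z : Fin d → ℂ) :
    MvPolynomial.eval (t • z) r
      = ∑ j ∈ Finset.range N, t ^ j * MvPolynomial.eval z (MvPolynomial.homogeneousComponent j r) := by
  conv_lhs => rw [← MvPolynomial.sum_homogeneousComponent r]
  rw [map_sum]
  rw [Finset.sum_congr rfl (fun j _ => aux_eval_smul
    (MvPolynomial.homogeneousComponent_isHomogeneous j r) t z)]
  apply Finset.sum_subset
  · exact Finset.range_subset_range.2 hN
  · intro j hj hnj
    have : r.totalDegree < j := by
      simp only [Finset.mem_range, not_lt] at hnj ⊢
      omega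
    rw [MvPolynomial.homogeneousComponent_eq_zero _ _ this, map_zero, mul_zero]

lemma aux_tendsto {d : ℕ} (r : MvPolynomial (Fin d) ℂ) (k N : ℕ) (hN : r.totalDegree < N)
    (hk : k < N) (hlow : ∀ j, j < k → MvPolynomial.homogeneousComponent j r = 0)
    (z : Fin d → ℂ) :
    Filter.Tendsto (fun t : ℝ => MvPolynomial.eval (((t : ℂ)) • z) r / (t : ℂ) ^ k)
      (nhdsWithin (0:ℝ) (Set.Ioi 0))
      (nhds (MvPolynomial.eval z (MvPolynomial.homogeneousComponent k r))) := by
  set Q : ℕ → ℂ := fun j => MvPolynomial.eval z (MvPolynomial.homogeneousComponent j r) with hQ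
  set g : ℝ → ℂ := fun t => ∑ j ∈ Finset.Ico k N, (t : ℂ) ^ (j - k) * Q j with hg
  have hg0 : g 0 = Q k := by
    show (∑ j ∈ Finset.Ico k N, ((0:ℝ) : ℂ) ^ (j - k) * Q j) = Q k
    rw [Finset.sum_eq_single_of_mem k (Finset.mem_Ico.2 ⟨le_refl k, hk⟩)]
    · simp
    · intro j hj hne
      have : 0 < j - k := by
        have := (Finset.mem_Ico.1 hj).1
        omega
      rw [Complex.ofReal_zero, zero_pow (by omega), zero_mul]
  have hcont : Continuous g := by
    apply continuous_finset_sum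
    intro j _
    exact (Complex.continuous_ofReal.pow _).mul continuous_const
  have heq : ∀ t ∈ Set.Ioi (0:ℝ),
      MvPolynomial.eval (((t : ℂ)) • z) r / (t : ℂ) ^ k = g t := by
    intro t ht
    have htne : (t : ℂ) ≠ 0 := by
      simp only [ne_eq, Complex.ofReal_eq_zero]
      exact ne_of_gt ht
    rw [aux_eval_expand r N hN]
    have hsub : ∑ j ∈ Finset.range N, (t:ℂ) ^ j * Q j = ∑ j ∈ Finset.Ico k N, (t:ℂ) ^ j * Q j := by
      symm
      apply Finset.sum_subset
      · intro x hx
        rw [Finset.mem_range]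
        exact (Finset.mem_Ico.1 hx).2
      · intro x hx hnx
        have hxk : x < k := by
          rw [Finset.mem_range] at hx
          rw [Finset.mem_Ico] at hnx
          omega
        rw [hQ]
        simp only []
        rw [hlow x hxk, map_zero, mul_zero]
    rw [hsub, Finset.sum_div, hg]
    apply Finset.sum_congr rfl
    intro j hj
    have hkj : k ≤ j := (Finset.mem_Ico.1 hj).1
    have hpow : (t:ℂ) ^ j = (t:ℂ) ^ (j - k) * (t:ℂ) ^ k := by
      rw [← pow_add]; congr 1; omega
    rw [hpow]
    field_simp
  have htg : Filter.Tendsto g (nhdsWithin (0:ℝ) (Set.Ioi 0)) (nhds (Q k)) := by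
    rw [← hg0]
    exact (hcont.tendsto 0).mono_left nhdsWithin_le_nhds
  apply Filter.Tendsto.congr' _ htg
  exact Filter.eventuallyEq_of_mem self_mem_nhdsWithin (fun t ht => (heq t ht).symm)

lemma aux_bound_ext (F G : Polynomial ℂ) (C : ℝ) (S : Set ℂ) (hS : Dense S)
    (h : ∀ s ∈ S, ‖F.eval s‖ ≤ C * ‖G.eval s‖) (s : ℂ) : ‖F.eval s‖ ≤ C * ‖G.eval s‖ := by
  have hc : IsClosed {x : ℂ | ‖F.eval x‖ ≤ C * ‖G.eval x‖} :=
    isClosed_le (F.continuous.norm) (continuous_const.mul G.continuous.norm)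
  have hsub : closure S ⊆ {x : ℂ | ‖F.eval x‖ ≤ C * ‖G.eval x‖} :=
    closure_minimal h hc
  exact hsub (hS s)

lemma aux_const_of_bound_degzero (F G : Polynomial ℂ) (C : ℝ) (hG : G.natDegree = 0)
    (h : ∀ s, ‖F.eval s‖ ≤ C * ‖G.eval s‖) : ∃ c : ℂ, F = Polynomial.C c * G := by
  obtain ⟨g, rfl⟩ : ∃ g, G = Polynomial.C g := ⟨G.coeff 0, Polynomial.eq_C_of_natDegree_le_zero (le_of_eq hG)⟩
  by_cases hg : g = 0
  · refine ⟨0, ?_⟩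
    subst hg
    have : F = 0 := by
      apply Polynomial.funext
      intro s
      have := h s
      simp only [Polynomial.eval_C, norm_zero, mul_zero] at this
      simpa using norm_le_zero_iff.1 this
    simp [this]
  · -- F must be constant
    have hF : F.natDegree = 0 := by
      by_contra hF
      have hdeg : 0 < F.degree := Polynomial.natDegree_pos_iff_degree_pos.1 (Nat.pos_of_ne_zero hF)
      set w : ℂ := ((C * ‖g‖ + 1 : ℝ) : ℂ) with hw
      have hdeg2 : 0 < (F - Polynomial.C w).degree := by
        rw [Polynomial.degree_sub_C hdeg]
        exact hdeg
      obtain ⟨s, hs⟩ := Complex.exists_root hdeg2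
      have hFs : F.eval s = w := by
        have : (F - Polynomial.C w).eval s = 0 := hs
        simp only [Polynomial.eval_sub, Polynomial.eval_C] at this
        linear_combination this
      have hb := h s
      rw [hFs, Polynomial.eval_C] at hb
      have : C * ‖g‖ + 1 ≤ C * ‖g‖ := by
        calc C * ‖g‖ + 1 ≤ ‖w‖ := by
              rw [hw, Complex.norm_real]
              exact le_abs_self _
          _ ≤ C * ‖g‖ := hb
      linarith
    obtain ⟨f, rfl⟩ : ∃ f, F = Polynomial.C f := ⟨F.coeff 0, Polynomial.eq_C_of_natDegree_le_zero (le_of_eq hF)⟩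
    exact ⟨f / g, by rw [← Polynomial.C_mul, div_mul_cancel₀ f hg]⟩

lemma aux_const_of_bound : ∀ (n : ℕ) (F G : Polynomial ℂ), G.natDegree ≤ n → ∀ (C : ℝ),
    (∀ s, ‖F.eval s‖ ≤ C * ‖G.eval s‖) → ∃ c : ℂ, F = Polynomial.C c * G := by
  intro n
  induction n with
  | zero => intro F G hdeg C h; exact aux_const_of_bound_degzero F G C (Nat.le_zero.1 hdeg) h
  | succ n IH =>
    intro F G hdeg C h
    by_cases hG0 : G.natDegree = 0
    · exact aux_const_of_bound_degzero F G C hG0 h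
    · have hGne : G ≠ 0 := fun h0 => hG0 (by simp [h0])
      have hdegpos : 0 < G.degree := Polynomial.natDegree_pos_iff_degree_pos.1 (Nat.pos_of_ne_zero hG0)
      obtain ⟨r, hr⟩ := Complex.exists_root hdegpos
      have hFr : F.IsRoot r := by
        have hb := h r
        rw [Polynomial.IsRoot] at hr
        rw [hr, norm_zero, mul_zero] at hb
        exact norm_le_zero_iff.1 hb
      have hFdiv : (Polynomial.X - Polynomial.C r) * (F / (Polynomial.X - Polynomial.C r)) = F :=
        Polynomial.mul_div_eq_iff_isRoot.2 hFr
      have hGdiv : (Polynomial.X - Polynomial.C r) * (G / (Polynomial.X - Polynomial.C r)) = G :=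
        Polynomial.mul_div_eq_iff_isRoot.2 hr
      set F₁ := F / (Polynomial.X - Polynomial.C r) with hF1
      set G₁ := G / (Polynomial.X - Polynomial.C r) with hG1
      have hG1ne : G₁ ≠ 0 := by
        intro h0
        rw [h0, mul_zero] at hGdiv
        exact hGne hGdiv.symm
      have hXr : (Polynomial.X - Polynomial.C r) ≠ (0 : Polynomial ℂ) := Polynomial.X_sub_C_ne_zero r
      have hdeg1 : G₁.natDegree ≤ n := by
        have : G.natDegree = 1 + G₁.natDegree := by
          rw [← hGdiv, Polynomial.natDegree_mul hXr hG1ne, Polynomial.natDegree_X_sub_C]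
        omega
      have hb1 : ∀ s, ‖F₁.eval s‖ ≤ C * ‖G₁.eval s‖ := by
        apply aux_bound_ext F₁ G₁ C {r}ᶜ (dense_compl_singleton r)
        intro s hs
        have hsr : s - r ≠ 0 := sub_ne_zero.2 hs
        have hδ : 0 < ‖s - r‖ := norm_pos_iff.2 hsr
        have hFe : ‖F.eval s‖ = ‖s - r‖ * ‖F₁.eval s‖ := by
          conv_lhs => rw [← hFdiv]
          rw [Polynomial.eval_mul, norm_mul]
          simp
        have hGe : ‖G.eval s‖ = ‖s - r‖ * ‖G₁.eval s‖ := by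
          conv_lhs => rw [← hGdiv]
          rw [Polynomial.eval_mul, norm_mul]
          simp
        have hb := h s
        rw [hFe, hGe] at hb
        rw [show C * (‖s - r‖ * ‖G₁.eval s‖) = ‖s - r‖ * (C * ‖G₁.eval s‖) by ring] at hb
        exact (mul_le_mul_iff_right₀ hδ).1 hb
      obtain ⟨c, hc⟩ := IH F₁ G₁ hdeg1 C hb1
      refine ⟨c, ?_⟩
      rw [← hFdiv, ← hGdiv, hc]
      ring

lemma aux_eval_line {d : ℕ} (r : MvPolynomial (Fin d) ℂ) (g : Fin d → Polynomial ℂ) (s : ℂ) :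
    Polynomial.eval s (MvPolynomial.aeval g r)
      = MvPolynomial.eval (fun i => Polynomial.eval s (g i)) r := by
  induction r using MvPolynomial.induction_on with
  | C a => simp
  | add f g hf hg => simp [hf, hg]
  | mul_X f i hf => simp [hf]

lemma aux_dense_im_ne : Dense {s : ℂ | s.im ≠ 0} := by
  intro z
  rw [Metric.mem_closure_iff]
  intro ε hε
  by_cases hz : z.im = 0
  · refine ⟨z + (ε/2) * Complex.I, ?_, ?_⟩
    · simp only [Set.mem_setOf_eq, Complex.add_im, Complex.mul_im, Complex.I_im, Complex.I_re,
        Complex.ofReal_re]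
      simp [hz]
      positivity
    · rw [Complex.dist_eq]
      have : z - (z + (ε/2) * Complex.I) = -((ε/2 : ℝ) * Complex.I) := by push_cast; ring
      rw [this, norm_neg, norm_mul, Complex.norm_I, mul_one,
        Complex.norm_real, Real.norm_eq_abs, abs_of_pos (by positivity : (0:ℝ) < ε/2)]
      linarith
  · exact ⟨z, hz, by simp [hε]⟩

/-- The upper half plane is infinite. -/
lemma aux_uhp_infinite : ({z : ℂ | 0 < z.im}).Infinite := by
  refine Set.infinite_of_injective_forall_mem (f := fun n : ℕ => ((n : ℝ) + 1) * Complex.I) ?_ ?_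
  · intro a b hab
    simp only at hab
    have h := congrArg Complex.im hab
    simp only [Complex.mul_im, Complex.I_im, Complex.I_re, mul_zero, mul_one,
      Complex.ofReal_re, Complex.ofReal_im, Complex.add_im, Complex.add_re,
      Complex.one_re, Complex.one_im, add_zero, zero_add] at h
    have : (a : ℝ) = b := by
      have h' : ((a : ℝ) + 1) = ((b : ℝ) + 1) := by simpa using h
      linarith
    exact_mod_cast this
  · intro n
    simp only [Set.mem_setOf_eq, Complex.mul_im, Complex.I_im, Complex.I_re, mul_zero, mul_one]
    simp only [Complex.add_re, Complex.ofReal_re, Complex.one_re, Complex.add_im,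
      Complex.ofReal_im, Complex.one_im, add_zero, zero_add]
    positivity

/-- Positive reals inside ℂ form an infinite set. -/
lemma aux_pos_infinite : ({z : ℂ | 0 < z.re ∧ z.im = 0}).Infinite := by
  refine Set.infinite_of_injective_forall_mem
    (f := fun n : ℕ => ((((n : ℝ) + 1) : ℝ) : ℂ)) ?_ ?_
  · intro a b hab
    simp only at hab
    have h := congrArg Complex.re hab
    simp only [Complex.ofReal_re] at h
    have : (a : ℝ) = b := by linarith
    exact_mod_cast this
  · intro n
    refine ⟨?_, ?_⟩
    · simp only [Complex.ofReal_re]; positivity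
    · simp only [Complex.ofReal_im]

lemma aux_homog_multiple {d M : ℕ} (P Q : MvPolynomial (Fin d) ℂ)
    (hP : P.IsHomogeneous M) (hQ : Q.IsHomogeneous M) (C : ℝ)
    (hb : ∀ z : Fin d → ℂ, (∀ i, 0 < (z i).im) →
      ‖MvPolynomial.eval z Q‖ ≤ C * ‖MvPolynomial.eval z P‖) :
    ∃ b : ℂ, Q = b • P := by
  classical
  -- Step 1: along every line through a positive real point in a positive real direction,
  -- Q is a constant multiple of P.
  have key : ∀ (a v : Fin d → ℝ), (∀ i, 0 < a i) → (∀ i, 0 < v i) →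
      ∃ c : ℂ, ∀ s : ℂ,
        MvPolynomial.eval (fun i => (a i : ℂ) + s * v i) Q
          = c * MvPolynomial.eval (fun i => (a i : ℂ) + s * v i) P := by
    intro a v ha hv
    set g : Fin d → Polynomial ℂ :=
      fun i => Polynomial.C ((a i : ℂ)) + Polynomial.X * Polynomial.C ((v i : ℂ)) with hgdef
    have hgev : ∀ (s : ℂ) (i : Fin d), Polynomial.eval s (g i) = (a i : ℂ) + s * v i := by
      intro s i; simp [hgdef]; ring
    have hFev : ∀ s : ℂ, Polynomial.eval s (MvPolynomial.aeval g Q)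
        = MvPolynomial.eval (fun i => (a i : ℂ) + s * v i) Q := by
      intro s; rw [aux_eval_line, show (fun i => Polynomial.eval s (g i))
        = (fun i => (a i : ℂ) + s * v i) from funext (hgev s)]
    have hGev : ∀ s : ℂ, Polynomial.eval s (MvPolynomial.aeval g P)
        = MvPolynomial.eval (fun i => (a i : ℂ) + s * v i) P := by
      intro s; rw [aux_eval_line, show (fun i => Polynomial.eval s (g i))
        = (fun i => (a i : ℂ) + s * v i) from funext (hgev s)]
    have hbd : ∀ s : ℂ, ‖(MvPolynomial.aeval g Q).eval s‖ ≤ C * ‖(MvPolynomial.aeval g P).eval s‖ := by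
      apply aux_bound_ext _ _ _ _ aux_dense_im_ne
      intro s hs
      rw [hFev, hGev]
      set w : Fin d → ℂ := fun i => (a i : ℂ) + s * v i with hwdef
      have him : ∀ i, (w i).im = s.im * v i := by
        intro i
        simp [hwdef, Complex.add_im, Complex.mul_im]
      rcases lt_or_gt_of_ne (hs : s.im ≠ 0) with hneg | hpos
      · -- s.im < 0 : use -w ∈ ℍ^d and homogeneity
        have hmem : ∀ i, 0 < ((-w) i).im := by
          intro i
          simp only [Pi.neg_apply, Complex.neg_im, him]
          nlinarith [hv i]
        have hw : ((-1 : ℂ) • ((-w) : Fin d → ℂ)) = w := by funext i; simp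
        have eQ : MvPolynomial.eval w Q = (-1 : ℂ) ^ M * MvPolynomial.eval (-w) Q := by
          have h' := aux_eval_smul hQ (-1 : ℂ) (-w)
          rw [hw] at h'; exact h'
        have eP : MvPolynomial.eval w P = (-1 : ℂ) ^ M * MvPolynomial.eval (-w) P := by
          have h' := aux_eval_smul hP (-1 : ℂ) (-w)
          rw [hw] at h'; exact h'
        rw [eQ, eP, norm_mul, norm_mul]
        have h1 : ‖(-1 : ℂ) ^ M‖ = 1 := by
          rw [norm_pow, norm_neg, norm_one, one_pow]
        rw [h1, one_mul, one_mul]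
        exact hb (-w) hmem
      · have hmem : ∀ i, 0 < (w i).im := by
          intro i; rw [him]; exact mul_pos hpos (hv i)
        exact hb w hmem
    obtain ⟨c, hc⟩ := aux_const_of_bound (MvPolynomial.aeval g P).natDegree
      (MvPolynomial.aeval g Q) (MvPolynomial.aeval g P) le_rfl C hbd
    refine ⟨c, fun s => ?_⟩
    rw [← hFev, ← hGev, hc]
    simp
  -- Step 2: the two-point identity for positive tuples
  have pair : ∀ (a v : Fin d → ℝ), (∀ i, 0 < a i) → (∀ i, 0 < v i) →
      MvPolynomial.eval (fun i => (a i : ℂ)) Q * MvPolynomial.eval (fun i => (v i : ℂ)) P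
        = MvPolynomial.eval (fun i => (a i : ℂ)) P * MvPolynomial.eval (fun i => (v i : ℂ)) Q := by
    intro a v ha hv
    obtain ⟨c, hc⟩ := key a v ha hv
    have h1 : MvPolynomial.eval (fun i => (a i : ℂ)) Q
        = c * MvPolynomial.eval (fun i => (a i : ℂ)) P := by
      have := hc 0
      simpa using this
    -- swapped line
    set g₂ : Fin d → Polynomial ℂ :=
      fun i => Polynomial.C ((v i : ℂ)) + Polynomial.X * Polynomial.C ((a i : ℂ)) with hg2def
    have hF2 : ∀ u : ℂ, Polynomial.eval u (MvPolynomial.aeval g₂ Q)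
        = MvPolynomial.eval (fun i => (v i : ℂ) + u * a i) Q := by
      intro u; rw [aux_eval_line]
      have : (fun i => Polynomial.eval u (g₂ i)) = (fun i => (v i : ℂ) + u * a i) := by
        funext i; simp [hg2def]; ring
      rw [this]
    have hG2 : ∀ u : ℂ, Polynomial.eval u (MvPolynomial.aeval g₂ P)
        = MvPolynomial.eval (fun i => (v i : ℂ) + u * a i) P := by
      intro u; rw [aux_eval_line]
      have : (fun i => Polynomial.eval u (g₂ i)) = (fun i => (v i : ℂ) + u * a i) := by
        funext i; simp [hg2def]; ring
      rw [this]
    have heq2 : MvPolynomial.aeval g₂ Q = Polynomial.C c * MvPolynomial.aeval g₂ P := by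
      apply Polynomial.eq_of_infinite_eval_eq
      apply Set.Infinite.mono (s := {(0 : ℂ)}ᶜ)
      swap
      · exact Set.Finite.infinite_compl (Set.finite_singleton 0)
      intro u hu
      have hune : u ≠ 0 := hu
      simp only [Set.mem_setOf_eq, Polynomial.eval_mul, Polynomial.eval_C]
      rw [hF2, hG2]
      have hpt : (fun i => (v i : ℂ) + u * a i)
          = u • (fun i => (a i : ℂ) + u⁻¹ * v i) := by
        funext i
        simp only [Pi.smul_apply, smul_eq_mul]
        field_simp
        ring
      rw [hpt, aux_eval_smul hQ, aux_eval_smul hP, hc u⁻¹]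
      ring
    have h2 : MvPolynomial.eval (fun i => (v i : ℂ)) Q
        = c * MvPolynomial.eval (fun i => (v i : ℂ)) P := by
      have h0 := congrArg (Polynomial.eval (0 : ℂ)) heq2
      rw [Polynomial.eval_mul, Polynomial.eval_C, hF2, hG2] at h0
      simpa using h0
    rw [h1, h2]
    ring
  -- Step 3: conclude
  by_cases hP0 : P = 0
  · refine ⟨0, ?_⟩
    have hQ0 : Q = 0 := by
      apply aux_eval_zero_of_forall_mem d (fun _ => {z : ℂ | 0 < z.im})
        (fun _ => aux_uhp_infinite)
      intro z hz
      have := hb z (fun i => hz i)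
      rw [hP0] at this
      simp only [map_zero, norm_zero, mul_zero] at this
      exact norm_le_zero_iff.1 this
    rw [hQ0, zero_smul]
  · -- find a positive point where P doesn't vanish
    have hex : ∃ z : Fin d → ℂ, (∀ i, z i ∈ {w : ℂ | 0 < w.re ∧ w.im = 0}) ∧
        MvPolynomial.eval z P ≠ 0 := by
      by_contra hno
      push_neg at hno
      exact hP0 (aux_eval_zero_of_forall_mem d _ (fun _ => aux_pos_infinite) P hno)
    obtain ⟨z₀, hz₀mem, hz₀⟩ := hex
    set a₀ : Fin d → ℝ := fun i => (z₀ i).re with ha₀def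
    have hz₀eq : (fun i => ((a₀ i : ℝ) : ℂ)) = z₀ := by
      funext i
      apply Complex.ext
      · simp [ha₀def]
      · simp [ha₀def, (hz₀mem i).2]
    have ha₀pos : ∀ i, 0 < a₀ i := fun i => (hz₀mem i).1
    set T : MvPolynomial (Fin d) ℂ :=
      (MvPolynomial.eval z₀ P) • Q - (MvPolynomial.eval z₀ Q) • P with hTdef
    have hT0 : T = 0 := by
      apply aux_eval_zero_of_forall_mem d (fun _ => {w : ℂ | 0 < w.re ∧ w.im = 0})
        (fun _ => aux_pos_infinite)
      intro z hz
      set v : Fin d → ℝ := fun i => (z i).re with hvdef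
      have hzeq : (fun i => ((v i : ℝ) : ℂ)) = z := by
        funext i
        apply Complex.ext
        · simp [hvdef]
        · simp [hvdef, (hz i).2]
      have hvpos : ∀ i, 0 < v i := fun i => (hz i).1
      have := pair a₀ v ha₀pos hvpos
      rw [hz₀eq, hzeq] at this
      rw [hTdef]
      simp only [map_sub, MvPolynomial.smul_eval]
      linear_combination -this
    refine ⟨MvPolynomial.eval z₀ Q / MvPolynomial.eval z₀ P, ?_⟩
    have hsmul : (MvPolynomial.eval z₀ P) • Q = (MvPolynomial.eval z₀ Q) • P := by
      have := sub_eq_zero.1 hT0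
      exact this
    have := congrArg (fun r => (MvPolynomial.eval z₀ P)⁻¹ • r) hsmul
    simp only [smul_smul] at this
    rw [inv_mul_cancel₀ hz₀, one_smul] at this
    rw [this]
    congr 1
    rw [← this, div_eq_inv_mul]

/-- **Lemma (the lowest numerator term is a multiple of the lowest denominator
term).**  Let `p, q ∈ ℂ[z₁,…,z_d]` with `p` zero-free on `ℍ^d`, `p(0) = 0` with
order of vanishing `M` and lowest homogeneous term `P_M`, and let `Q_M` be the
degree-`M` homogeneous part of `q`.  If `f = q/p` is bounded on `ℍ^d`, then
`Q_M = b ⋅ P_M` for some constant `b ∈ ℂ`. -/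
theorem bounded_ratio_lowest_term_multiple (d : ℕ) (p q : MvPolynomial (Fin d) ℂ)
    (M : ℕ)
    (hstable : ∀ z : Fin d → ℂ, (∀ i, 0 < (z i).im) → MvPolynomial.eval z p ≠ 0)
    (hp0 : MvPolynomial.eval (0 : Fin d → ℂ) p = 0)
    (hM : MvPolynomial.homogeneousComponent M p ≠ 0)
    (hMmin : ∀ j < M, MvPolynomial.homogeneousComponent j p = 0)
    (hbd : ∃ C : ℝ, ∀ z : Fin d → ℂ, (∀ i, 0 < (z i).im) →
      ‖MvPolynomial.eval z q / MvPolynomial.eval z p‖ ≤ C) :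
    ∃ b : ℂ, MvPolynomial.homogeneousComponent M q
      = b • MvPolynomial.homogeneousComponent M p := by
  classical
  rcases Nat.eq_zero_or_pos d with hd0 | hdpos
  · subst hd0
    exact absurd hp0 (hstable 0 (fun i => i.elim0))
  obtain ⟨C, hC⟩ := hbd
  -- pointwise bound in norms
  have hQP : ∀ z : Fin d → ℂ, (∀ i, 0 < (z i).im) →
      ‖MvPolynomial.eval z q‖ ≤ C * ‖MvPolynomial.eval z p‖ := by
    intro z hz
    have hpz : MvPolynomial.eval z p ≠ 0 := hstable z hz
    have := hC z hz
    rw [norm_div] at this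
    rw [div_le_iff₀ (norm_pos_iff.2 hpz)] at this
    simpa using this
  set N : ℕ := max p.totalDegree q.totalDegree + M + 1 with hNdef
  have hpN : p.totalDegree < N := by
    have := le_max_left p.totalDegree q.totalDegree
    omega
  have hqN : q.totalDegree < N := by
    have := le_max_right p.totalDegree q.totalDegree
    omega
  have hMN : M < N := by omega
  have hev : ∀ (k : ℕ) (z : Fin d → ℂ), (∀ i, 0 < (z i).im) →
      ∀ᶠ t : ℝ in nhdsWithin 0 (Set.Ioi 0),
        ‖MvPolynomial.eval (((t:ℂ)) • z) q / (t:ℂ)^k‖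
          ≤ C * ‖MvPolynomial.eval (((t:ℂ)) • z) p / (t:ℂ)^k‖ := by
    intro k z hzH
    filter_upwards [self_mem_nhdsWithin] with t ht
    have htpos : (0:ℝ) < t := ht
    have htne : (t:ℂ) ≠ 0 := by
      simp only [ne_eq, Complex.ofReal_eq_zero]
      exact ne_of_gt htpos
    have hmem : ∀ i, 0 < (((t:ℂ) • z) i).im := by
      intro i
      have hmul : ((t:ℂ) * z i).im = t * (z i).im := by
        simp [Complex.mul_im]
      simp only [Pi.smul_apply, smul_eq_mul, hmul]
      exact mul_pos htpos (hzH i)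
    have hb := hQP ((t:ℂ) • z) hmem
    rw [norm_div, norm_div, ← mul_div_assoc]
    have hden : (0:ℝ) < ‖(t:ℂ)^k‖ := by
      rw [norm_pos_iff]
      exact pow_ne_zero _ htne
    exact (div_le_div_iff_of_pos_right hden).2 hb
  -- lower homogeneous components of q vanish
  have hqlow : ∀ j, j < M → MvPolynomial.homogeneousComponent j q = 0 := by
    intro j
    induction j using Nat.strong_induction_on with
    | _ j IH =>
      intro hjM
      apply aux_eval_zero_of_forall_mem d (fun _ => {z : ℂ | 0 < z.im})
        (fun _ => aux_uhp_infinite)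
      intro z hz
      have hzH : ∀ i, 0 < (z i).im := fun i => hz i
      have hA := aux_tendsto q j N hqN (by omega)
        (fun l hl => IH l hl (by omega)) z
      have hB := aux_tendsto p j N hpN (by omega)
        (fun l hl => hMmin l (by omega)) z
      have hBzero : MvPolynomial.eval z (MvPolynomial.homogeneousComponent j p) = 0 := by
        rw [hMmin j hjM, map_zero]
      rw [hBzero] at hB
      have hlim : ‖MvPolynomial.eval z (MvPolynomial.homogeneousComponent j q)‖ ≤ C * ‖(0:ℂ)‖ :=
        le_of_tendsto_of_tendsto hA.norm (hB.norm.const_mul C) (hev j z hzH)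
      simp only [norm_zero, mul_zero] at hlim
      exact norm_le_zero_iff.1 hlim
  -- the limiting bound for the M-th components
  have hfinal : ∀ z : Fin d → ℂ, (∀ i, 0 < (z i).im) →
      ‖MvPolynomial.eval z (MvPolynomial.homogeneousComponent M q)‖
        ≤ C * ‖MvPolynomial.eval z (MvPolynomial.homogeneousComponent M p)‖ := by
    intro z hz
    have hA := aux_tendsto q M N hqN hMN (fun l hl => hqlow l hl) z
    have hB := aux_tendsto p M N hpN hMN (fun l hl => hMmin l hl) z
    exact le_of_tendsto_of_tendsto hA.norm (hB.norm.const_mul C) (hev M z hz)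
  exact aux_homog_multiple _ _ (MvPolynomial.homogeneousComponent_isHomogeneous M p)
    (MvPolynomial.homogeneousComponent_isHomogeneous M q) C hfinal
end
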